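/- arXiv:2304.12110 — 5 statements merged into one kernel-verified Lean document; each statement's English description precedes it below -/
import Mathlib

section
/- Let E be a finite set and q ∈ [0,1]. Let μ be a probability measure on {0,1}^E. Suppose there is an exploration of E (an adapted ordering: the first coordinate queried is deterministic, and each subsequent coordinate queried depends only on the identities and values of previously queried coordinates) such that for every step k and every exploration history (e,x) of positive μ-probability, the conditional probability under μ that the (k+1)-st queried coordinate equals 1, given the history, is at least q. Then the product Bernoulli measure of parameter q on {0,1}^E is stochastically dominated by μ, i.e. μ_q[A] ≤ μ[A] for every increasing (monotone) subset A of {0,1}^E. -/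
open MeasureTheory ProbabilityTheory Function
open scoped ENNReal

/-- The Bernoulli measure on `Bool` with parameter `p` (truncated to `[0,1]`). -/
noncomputable def bernB (p : ℝ≥0∞) : Measure Bool :=
  (PMF.bernoulli (min p 1).toNNReal
    (by simpa using ENNReal.toNNReal_mono ENNReal.one_ne_top (min_le_right p 1))).toMeasure

/-- The product Bernoulli measure of parameter `p` on `{0,1}^E`. -/
noncomputable def prodBern (E : Type*) [Fintype E] (p : ℝ≥0∞) : Measure (E → Bool) :=
  Measure.pi fun _ => bernB p

/-- A subset of `{0,1}^E` is increasing if it is preserved by coordinatewise increase. -/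
def IncreasingSet {E : Type*} (A : Set (E → Bool)) : Prop :=
  ∀ ω ω' : E → Bool, (∀ e, ω e ≤ ω' e) → ω ∈ A → ω' ∈ A

/-- An exploration of a finite set `E`: an adapted ordering of the coordinates.
The first queried coordinate is deterministic, and the `k`-th queried coordinate
depends only on the identities and values of the previously queried coordinates. -/
structure Exploration (E : Type*) [Fintype E] where
  order : (E → Bool) → Fin (Fintype.card E) → E
  bij : ∀ ω, Function.Bijective (order ω)
  adapted : ∀ ω ω' (k : Fin (Fintype.card E)),
    (∀ j, j < k → order ω j = order ω' j ∧ ω (order ω j) = ω' (order ω j)) →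
    order ω k = order ω' k

/-- `ExplEvent expl k e x` is the event `Expl_k(e,x)` that the exploration agrees with the
ordering `e` and the values `x` up to step `k`. -/
def ExplEvent {E : Type*} [Fintype E] (expl : Exploration E) (k : ℕ)
    (e : Fin (Fintype.card E) → E) (x : E → Bool) : Set (E → Bool) :=
  {ω | ∀ j : Fin (Fintype.card E), (j : ℕ) < k → expl.order ω j = e j ∧ ω (e j) = x (e j)}

section Helpers
variable {E : Type*} [Fintype E] [DecidableEq E] {q : ℝ≥0∞}

omit [DecidableEq E] in
lemma measAll (s : Set (E → Bool)) : MeasurableSet s := s.toFinite.measurableSet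

instance (p : ℝ≥0∞) : IsProbabilityMeasure (bernB p) :=
  PMF.toMeasure.isProbabilityMeasure _

instance (p : ℝ≥0∞) : IsProbabilityMeasure (prodBern E p) := by
  unfold prodBern; infer_instance

lemma bernB_apply (b : Bool) (hq : q ≤ 1) :
    bernB q {b} = bif b then q else 1 - q := by
  rw [bernB, PMF.toMeasure_apply_singleton _ _ (measurableSet_singleton _)]
  simp only [PMF.bernoulli_apply, min_eq_left hq]
  have hqt : q ≠ ⊤ := ne_top_of_le_ne_top ENNReal.one_ne_top hq
  cases b <;> simp [ENNReal.coe_sub, ENNReal.coe_toNNReal hqt]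

omit [DecidableEq E] in
lemma prodBern_singleton (σ : E → Bool) :
    prodBern E q {σ} = ∏ a, bernB q {σ a} := by
  have h : ({σ} : Set (E → Bool)) = Set.univ.pi fun a => {σ a} := by
    ext τ; simp [funext_iff, Set.mem_univ_pi]
  rw [prodBern, h, Measure.pi_pi]

lemma prodBern_slice (c : E) (b : Bool) (B : Set (E → Bool)) :
    prodBern E q (B ∩ {σ | σ c = b})
      = bernB q {b} * prodBern E q ((fun ω => update ω c b) ⁻¹' B) := by
  have key : (prodBern E q).restrict {σ | σ c = b}
      = bernB q {b} • (prodBern E q).map (fun ω => update ω c b) := by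
    apply Measure.ext_of_singleton
    intro σ
    rw [Measure.restrict_apply (measAll _), Measure.smul_apply, smul_eq_mul,
      Measure.map_apply (measurable_of_finite _) (measAll _)]
    by_cases hσ : σ c = b
    · have h1 : ({σ} : Set (E → Bool)) ∩ {σ' | σ' c = b} = {σ} := by
        apply Set.inter_eq_left.mpr
        intro τ hτ
        rw [Set.mem_singleton_iff] at hτ
        subst hτ; exact hσ
      have h2 : (fun ω => update ω c b) ⁻¹' {σ}
          = Set.univ.pi fun a => if a = c then Set.univ else {σ a} := by
        ext ω
        simp only [Set.mem_preimage, Set.mem_singleton_iff, funext_iff, Set.mem_univ_pi]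
        constructor
        · intro h a
          by_cases hac : a = c
          · simp [hac]
          · simpa [update_of_ne hac, hac] using h a
        · intro h a
          by_cases hac : a = c
          · subst hac; rw [update_self]; exact hσ.symm
          · have := h a; rw [if_neg hac, Set.mem_singleton_iff] at this
            rw [update_of_ne hac]; exact this
      rw [h1, h2, prodBern_singleton, prodBern, Measure.pi_pi]
      rw [← Finset.mul_prod_erase Finset.univ (fun a => bernB q {σ a}) (Finset.mem_univ c),
          ← Finset.mul_prod_erase Finset.univ
            (fun a => bernB q (if a = c then Set.univ else {σ a})) (Finset.mem_univ c)]
      rw [if_pos rfl, measure_univ, one_mul, hσ]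
      congr 1
      apply Finset.prod_congr rfl
      intro a ha
      rw [if_neg (Finset.ne_of_mem_erase ha)]
    · have h1 : ({σ} : Set (E → Bool)) ∩ {σ' | σ' c = b} = ∅ := by
        ext τ
        simp only [Set.mem_inter_iff, Set.mem_singleton_iff, Set.mem_setOf_eq,
          Set.mem_empty_iff_false, iff_false, not_and]
        rintro rfl; exact hσ
      have h2 : (fun ω => update ω c b) ⁻¹' {σ} = ∅ := by
        ext ω
        simp only [Set.mem_preimage, Set.mem_singleton_iff, Set.mem_empty_iff_false, iff_false]
        intro h; apply hσ; rw [← h, update_self]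
      rw [h1, h2]; simp
  calc prodBern E q (B ∩ {σ | σ c = b})
      = (prodBern E q).restrict {σ | σ c = b} B := (Measure.restrict_apply (measAll _)).symm
    _ = bernB q {b} * prodBern E q ((fun ω => update ω c b) ⁻¹' B) := by
        rw [key, Measure.smul_apply, smul_eq_mul,
          Measure.map_apply (measurable_of_finite _) (measAll _)]

lemma prodBern_decomp (hq : q ≤ 1) (c : E) (B : Set (E → Bool)) :
    prodBern E q B
      = q * prodBern E q ((fun ω => update ω c true) ⁻¹' B)
        + (1 - q) * prodBern E q ((fun ω => update ω c false) ⁻¹' B) := by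
  have hsplit : B = (B ∩ {σ | σ c = true}) ∪ (B ∩ {σ | σ c = false}) := by
    ext σ; by_cases h : σ c <;> simp [h]
  have hdisj : Disjoint (B ∩ {σ | σ c = true}) (B ∩ {σ | σ c = false}) := by
    rw [Set.disjoint_left]
    rintro σ ⟨-, h1⟩ ⟨-, h2⟩
    simp only [Set.mem_setOf_eq] at h1 h2
    rw [h1] at h2; exact Bool.noConfusion h2
  calc prodBern E q B
      = prodBern E q (B ∩ {σ | σ c = true}) + prodBern E q (B ∩ {σ | σ c = false}) := by
        conv_lhs => rw [hsplit]
        exact measure_union hdisj (measAll _)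
    _ = _ := by
        rw [prodBern_slice, prodBern_slice, bernB_apply _ hq, bernB_apply _ hq]
        rfl

lemma interp {a b p r : ℝ≥0∞} (hba : b ≤ a) (hrp : r ≤ p) (hp1 : p ≤ 1) :
    r * a + (1 - r) * b ≤ p * a + (1 - p) * b := by
  have h1 : (1 : ℝ≥0∞) - r = (p - r) + (1 - p) := by
    rw [add_comm, tsub_add_tsub_cancel hp1 hrp]
  rw [h1, add_mul]
  calc r * a + ((p - r) * b + (1 - p) * b)
      ≤ r * a + ((p - r) * a + (1 - p) * b) := by gcongr
    _ = (r + (p - r)) * a + (1 - p) * b := by ring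
    _ = p * a + (1 - p) * b := by rw [add_tsub_cancel_of_le hrp]

end Helpers

open Classical in
noncomputable def ov {E : Type*} [Fintype E] (k : ℕ) (e : Fin (Fintype.card E) → E)
    (x : E → Bool) (ω : E → Bool) : E → Bool :=
  fun a => if ∃ j : Fin (Fintype.card E), (j : ℕ) < k ∧ e j = a then x a else ω a

lemma key_lemma {E : Type*} [Fintype E]
    (q : ℝ≥0∞) (hq : q ≤ 1) (μ : Measure (E → Bool)) [IsProbabilityMeasure μ]
    (expl : Exploration E)
    (H : ∀ (k : Fin (Fintype.card E)) (e : Fin (Fintype.card E) → E) (x : E → Bool),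
      μ (ExplEvent expl (Fintype.card E) e x) ≠ 0 →
      q ≤ μ[|ExplEvent expl k e x] {ω | ω (e k) = true})
    (A : Set (E → Bool)) (hA : IncreasingSet A) :
    ∀ (d k : ℕ), k + d = Fintype.card E →
      ∀ (e : Fin (Fintype.card E) → E) (x : E → Bool), μ (ExplEvent expl k e x) ≠ 0 →
      prodBern E q ((ov k e x) ⁻¹' A) ≤ μ[|ExplEvent expl k e x] A := by
  classical
  intro d
  induction d with
  | zero =>
    intro k hkn e x hEv
    have hkn' : k = Fintype.card E := by omega
    subst hkn'
    obtain ⟨ω₀, hω₀⟩ : (ExplEvent expl (Fintype.card E) e x).Nonempty := by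
      rw [Set.nonempty_iff_ne_empty]
      intro h; rw [h] at hEv; simp at hEv
    have horder : ∀ j, expl.order ω₀ j = e j := fun j => (hω₀ j j.isLt).1
    have hbij : Function.Bijective e := by
      have h := expl.bij ω₀
      rwa [funext horder] at h
    have hmem_eq : ∀ ω ∈ ExplEvent expl (Fintype.card E) e x, ω = x := by
      intro ω hω
      funext a
      obtain ⟨j, rfl⟩ := hbij.2 a
      exact (hω j j.isLt).2
    have hEvx : ExplEvent expl (Fintype.card E) e x = {x} := by
      ext ω
      constructor
      · exact fun h => hmem_eq ω h
      · rintro rfl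
        exact (hmem_eq ω₀ hω₀) ▸ hω₀
    have hovx : ∀ ω, ov (Fintype.card E) e x ω = x := by
      intro ω; funext a
      obtain ⟨j, rfl⟩ := hbij.2 a
      show (if ∃ j' : Fin _, (j' : ℕ) < Fintype.card E ∧ e j' = e j then x (e j) else ω (e j)) = x (e j)
      exact if_pos ⟨j, j.isLt, rfl⟩
    by_cases hxA : x ∈ A
    · have h1 : μ[|ExplEvent expl (Fintype.card E) e x] A = 1 := by
        rw [cond_apply (measAll _), hEvx,
          Set.inter_eq_left.mpr (Set.singleton_subset_iff.mpr hxA),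
          ENNReal.inv_mul_cancel (hEvx ▸ hEv) (measure_ne_top μ _)]
      rw [h1]
      exact prob_le_one
    · have h0 : (ov (Fintype.card E) e x) ⁻¹' A = ∅ := by
        ext ω
        simp [Set.mem_preimage, hovx ω, hxA]
      rw [h0]
      simp
  | succ d ih =>
    intro k hkn e x hEv
    have hk : k < Fintype.card E := by omega
    -- an atom of positive measure in the event
    obtain ⟨ω₀, hω₀, hω₀pos⟩ : ∃ ω₀ ∈ ExplEvent expl k e x, μ {ω₀} ≠ 0 := by
      by_contra h
      push_neg at h
      apply hEv
      have hrw : ExplEvent expl k e x = ⋃ ω ∈ ExplEvent expl k e x, {ω} := by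
        rw [Set.biUnion_of_singleton]
      rw [hrw]
      exact (measure_biUnion_null_iff (Set.to_countable _)).mpr h
    set κ : Fin (Fintype.card E) := ⟨k, hk⟩ with hκdef
    have hκval : (κ : ℕ) = k := rfl
    set c : E := expl.order ω₀ κ with hcdef
    have horder₀ : ∀ j : Fin (Fintype.card E), (j : ℕ) < k → expl.order ω₀ j = e j :=
      fun j hj => (hω₀ j hj).1
    have hval₀ : ∀ j : Fin (Fintype.card E), (j : ℕ) < k → ω₀ (e j) = x (e j) :=
      fun j hj => (hω₀ j hj).2
    have horder_c : ∀ ω ∈ ExplEvent expl k e x, expl.order ω κ = c := by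
      intro ω hω
      apply expl.adapted ω ω₀ κ
      intro j hj
      have hjk : (j : ℕ) < k := hj
      refine ⟨(hω j hjk).1.trans (horder₀ j hjk).symm, ?_⟩
      rw [(hω j hjk).1]
      exact (hω j hjk).2.trans (hval₀ j hjk).symm
    have hc_not : ¬ ∃ j : Fin (Fintype.card E), (j : ℕ) < k ∧ e j = c := by
      rintro ⟨j, hj, hjc⟩
      have h1 : expl.order ω₀ j = expl.order ω₀ κ := by rw [horder₀ j hj, hjc]
      have h2 := (expl.bij ω₀).1 h1
      rw [h2] at hj
      omega
    have hejc : ∀ j : Fin (Fintype.card E), (j : ℕ) < k → e j ≠ c :=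
      fun j hj h => hc_not ⟨j, hj, h⟩
    set e' : Fin (Fintype.card E) → E := Function.update e κ c with he'def
    have he'κ : e' κ = c := update_self κ c e
    have he'j : ∀ j : Fin (Fintype.card E), (j : ℕ) < k → e' j = e j := by
      intro j hj
      apply update_of_ne
      intro h
      rw [h] at hj
      omega
    have hexp : ∀ a : E,
        (∃ j : Fin (Fintype.card E), (j : ℕ) < k + 1 ∧ e' j = a)
          ↔ (a = c ∨ ∃ j : Fin (Fintype.card E), (j : ℕ) < k ∧ e j = a) := by
      intro a
      constructor
      · rintro ⟨j, hj, hja⟩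
        by_cases hjκ : j = κ
        · left; rw [← hja, hjκ, he'κ]
        · right
          have hjk : (j : ℕ) < k := by
            have hne : (j : ℕ) ≠ k := fun h => hjκ (Fin.ext h)
            omega
          exact ⟨j, hjk, by rw [← he'j j hjk]; exact hja⟩
      · rintro (rfl | ⟨j, hj, hja⟩)
        · exact ⟨κ, by omega, he'κ⟩
        · exact ⟨j, by omega, by rw [he'j j hj]; exact hja⟩
    -- overriding identities
    have hov_upd : ∀ (b : Bool) (ω : E → Bool),
        ov k e x (update ω c b) = ov (k + 1) e' (update x c b) ω := by
      intro b ω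
      funext a
      show (if ∃ j : Fin _, (j : ℕ) < k ∧ e j = a then x a else update ω c b a)
        = (if ∃ j : Fin _, (j : ℕ) < k + 1 ∧ e' j = a then update x c b a else ω a)
      by_cases hac : a = c
      · subst hac
        rw [if_neg hc_not, if_pos ((hexp c).mpr (Or.inl rfl)), update_self, update_self]
      · by_cases hex : ∃ j : Fin (Fintype.card E), (j : ℕ) < k ∧ e j = a
        · rw [if_pos hex, if_pos ((hexp a).mpr (Or.inr hex)), update_of_ne hac]
        · rw [if_neg hex, if_neg (fun h => ((hexp a).mp h).elim hac hex), update_of_ne hac]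
    have hov_comm : ∀ (b : Bool) (ω : E → Bool),
        ov k e x (update ω c b) = update (ov k e x ω) c b := by
      intro b ω
      funext a
      show (if ∃ j : Fin _, (j : ℕ) < k ∧ e j = a then x a else update ω c b a)
        = update (ov k e x ω) c b a
      by_cases hac : a = c
      · subst hac
        rw [if_neg hc_not, update_self, update_self]
      · rw [update_of_ne hac, update_of_ne hac]
        rfl
    have hov_succ : ∀ (b : Bool) (ω : E → Bool),
        ov (k + 1) e' (update x c b) ω = update (ov k e x ω) c b :=
      fun b ω => (hov_upd b ω).symm.trans (hov_comm b ω)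
    -- event splitting
    have hEvsplit : ∀ b : Bool,
        ExplEvent expl (k + 1) e' (update x c b) = ExplEvent expl k e x ∩ {ω | ω c = b} := by
      intro b
      ext ω
      constructor
      · intro hω
        constructor
        · intro j hj
          have hj1 : (j : ℕ) < k + 1 := by omega
          obtain ⟨h1, h2⟩ := hω j hj1
          rw [he'j j hj] at h1 h2
          rw [update_of_ne (hejc j hj)] at h2
          exact ⟨h1, h2⟩
        · have hκ1 : (κ : ℕ) < k + 1 := by omega
          have h2 := (hω κ hκ1).2
          rw [he'κ, update_self] at h2
          exact h2
      · rintro ⟨hω, hωc⟩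
        intro j hj
        by_cases hjk : (j : ℕ) < k
        · obtain ⟨h1, h2⟩ := hω j hjk
          rw [he'j j hjk, update_of_ne (hejc j hjk)]
          exact ⟨h1, h2⟩
        · have hjκ : j = κ := Fin.ext (by omega)
          rw [hjκ, he'κ, update_self]
          exact ⟨horder_c ω hω, hωc⟩
    -- names
    set Ev := ExplEvent expl k e x with hEvdef
    set Bt := ExplEvent expl (k + 1) e' (update x c true) with hBtdef
    set Bf := ExplEvent expl (k + 1) e' (update x c false) with hBfdef
    have hBtEv : Bt = Ev ∩ {ω | ω c = true} := hEvsplit true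
    have hBfEv : Bf = Ev ∩ {ω | ω c = false} := hEvsplit false
    have hEvTop : μ Ev ≠ ⊤ := measure_ne_top μ _
    have hBtBf : μ Bt + μ Bf = μ Ev := by
      rw [hBtEv, hBfEv, ← measure_union ?_ (measAll _)]
      · congr 1
        ext σ
        by_cases h : σ c <;> simp [h]
      · rw [Set.disjoint_left]
        rintro σ ⟨-, h1⟩ ⟨-, h2⟩
        simp only [Set.mem_setOf_eq] at h1 h2
        rw [h1] at h2
        exact Bool.noConfusion h2
    set pt := (μ Ev)⁻¹ * μ Bt with hptdef
    set pf := (μ Ev)⁻¹ * μ Bf with hpfdef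
    have hsum : pt + pf = 1 := by
      rw [hptdef, hpfdef, ← mul_add, hBtBf, ENNReal.inv_mul_cancel hEv hEvTop]
    have hpt1 : pt ≤ 1 := by
      rw [← hsum]; exact le_self_add
    have hpf : pf = 1 - pt := by
      rw [← hsum, ENNReal.add_sub_cancel_left]
      rw [hptdef]
      exact ENNReal.mul_ne_top (ENNReal.inv_ne_top.mpr hEv) (measure_ne_top μ _)
    -- q ≤ pt via H
    have hqpt : q ≤ pt := by
      have hfull : μ (ExplEvent expl (Fintype.card E) (expl.order ω₀) ω₀) ≠ 0 := by
        intro h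
        apply hω₀pos
        refine measure_mono_null ?_ h
        intro ω hω
        rw [Set.mem_singleton_iff] at hω
        subst hω
        intro j hj
        exact ⟨rfl, rfl⟩
      have hHa := H κ (expl.order ω₀) ω₀ hfull
      have hEveq : ExplEvent expl (↑κ) (expl.order ω₀) ω₀ = Ev := by
        rw [hEvdef]
        ext ω
        constructor
        · intro hω j hj
          obtain ⟨h1, h2⟩ := hω j hj
          rw [horder₀ j hj] at h1 h2
          rw [hval₀ j hj] at h2
          exact ⟨h1, h2⟩
        · intro hω j hj
          obtain ⟨h1, h2⟩ := hω j hj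
          rw [horder₀ j hj, hval₀ j hj]
          exact ⟨h1, h2⟩
      rw [hEveq] at hHa
      have : μ[|Ev] {ω | ω (expl.order ω₀ κ) = true} = pt := by
        rw [cond_apply (measAll _), hptdef, hBtEv, ← hcdef]
      rw [this] at hHa
      exact hHa
    -- control of the Bernoulli side
    have hdecomp : prodBern E q ((ov k e x) ⁻¹' A)
        = q * prodBern E q ((ov (k + 1) e' (update x c true)) ⁻¹' A)
          + (1 - q) * prodBern E q ((ov (k + 1) e' (update x c false)) ⁻¹' A) := by
      have hset : ∀ b : Bool, (fun ω => update ω c b) ⁻¹' ((ov k e x) ⁻¹' A)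
          = (ov (k + 1) e' (update x c b)) ⁻¹' A := by
        intro b
        ext ω
        rw [Set.mem_preimage, Set.mem_preimage, Set.mem_preimage, hov_upd b ω]
      rw [prodBern_decomp hq c ((ov k e x) ⁻¹' A), hset true, hset false]
    have hmono : prodBern E q ((ov (k + 1) e' (update x c false)) ⁻¹' A)
        ≤ prodBern E q ((ov (k + 1) e' (update x c true)) ⁻¹' A) := by
      apply measure_mono
      intro ω hω
      rw [Set.mem_preimage] at hω ⊢
      apply hA _ _ _ hω
      intro a
      rw [hov_succ, hov_succ]
      by_cases hac : a = c
      · subst hac; rw [update_self, update_self]; exact Bool.false_le _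
      · rw [update_of_ne hac, update_of_ne hac]
    -- conditional decomposition of μ
    have hcondEv : μ[|Ev] A = pt * μ[|Bt] A + pf * μ[|Bf] A := by
      have hterm : ∀ (B : Set (E → Bool)), B ⊆ Ev →
          ((μ Ev)⁻¹ * μ B) * μ[|B] A = (μ Ev)⁻¹ * μ (B ∩ A) := by
        intro B hBE
        by_cases hB : μ B = 0
        · rw [hB, mul_zero, zero_mul]
          have : μ (B ∩ A) = 0 := measure_mono_null Set.inter_subset_left hB
          rw [this, mul_zero]
        · rw [cond_apply (measAll _)]
          rw [mul_assoc, ← mul_assoc (μ B), ENNReal.mul_inv_cancel hB (measure_ne_top μ _),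
            one_mul]
      rw [hterm Bt (by rw [hBtEv]; exact Set.inter_subset_left),
        hterm Bf (by rw [hBfEv]; exact Set.inter_subset_left),
        cond_apply (measAll _), ← mul_add]
      congr 1
      rw [← measure_union ?_ (measAll _)]
      · congr 1
        rw [hBtEv, hBfEv]
        ext σ
        by_cases h : σ c <;> simp [h, and_assoc, and_comm]
      · rw [Set.disjoint_left, hBtEv, hBfEv]
        rintro σ ⟨⟨-, h1⟩, -⟩ ⟨⟨-, h2⟩, -⟩
        simp only [Set.mem_setOf_eq] at h1 h2
        rw [h1] at h2
        exact Bool.noConfusion h2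
    -- finish
    rw [hdecomp, hcondEv, hpf]
    calc q * prodBern E q ((ov (k + 1) e' (update x c true)) ⁻¹' A)
          + (1 - q) * prodBern E q ((ov (k + 1) e' (update x c false)) ⁻¹' A)
        ≤ pt * prodBern E q ((ov (k + 1) e' (update x c true)) ⁻¹' A)
          + (1 - pt) * prodBern E q ((ov (k + 1) e' (update x c false)) ⁻¹' A) :=
          interp hmono hqpt hpt1
      _ ≤ pt * μ[|Bt] A + (1 - pt) * μ[|Bf] A := by
          apply add_le_add
          · by_cases hBt : μ Bt = 0
            · have h0 : pt = 0 := by rw [hptdef, hBt, mul_zero]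
              rw [h0, zero_mul, zero_mul]
            · exact mul_le_mul_right (ih (k + 1) (by omega) e' (update x c true) hBt) pt
          · by_cases hBf : μ Bf = 0
            · have h0 : (1 : ℝ≥0∞) - pt = 0 := by rw [← hpf, hpfdef, hBf, mul_zero]
              rw [h0, zero_mul, zero_mul]
            · exact mul_le_mul_right (ih (k + 1) (by omega) e' (update x c false) hBf) (1 - pt)



/-- If, along an exploration, every coordinate queried has conditional probability at least
`q` of being open given any history of positive probability, then the product Bernoulli
measure of parameter `q` is stochastically dominated by `μ`. -/
theorem exploration_stochastic_domination {E : Type*} [Fintype E]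
    (q : ℝ≥0∞) (hq : q ≤ 1) (μ : Measure (E → Bool)) [IsProbabilityMeasure μ]
    (expl : Exploration E)
    (H : ∀ (k : Fin (Fintype.card E)) (e : Fin (Fintype.card E) → E) (x : E → Bool),
      μ (ExplEvent expl (Fintype.card E) e x) ≠ 0 →
      q ≤ μ[|ExplEvent expl k e x] {ω | ω (e k) = true})
    (A : Set (E → Bool)) (hA : IncreasingSet A) :
    prodBern E q A ≤ μ A := by
  classical
  set e₀ : Fin (Fintype.card E) → E := expl.order (fun _ => false) with he₀
  set x₀ : E → Bool := fun _ => false with hx₀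
  have hEv : ExplEvent expl 0 e₀ x₀ = Set.univ := by
    ext ω
    simp only [ExplEvent, Set.mem_setOf_eq, Set.mem_univ, iff_true]
    intro j hj
    omega
  have hEvne : μ (ExplEvent expl 0 e₀ x₀) ≠ 0 := by
    rw [hEv, measure_univ]
    exact one_ne_zero
  have hkey := key_lemma q hq μ expl H A hA (Fintype.card E) 0 (by omega) e₀ x₀ hEvne
  have hov : (ov 0 e₀ x₀) ⁻¹' A = A := by
    have hid : ∀ ω, ov 0 e₀ x₀ ω = ω := by
      intro ω
      funext a
      show (if ∃ j : Fin (Fintype.card E), (j : ℕ) < 0 ∧ e₀ j = a then x₀ a else ω a) = ω a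
      rw [if_neg]
      rintro ⟨j, hj, -⟩
      omega
    ext ω
    rw [Set.mem_preimage, hid ω]
  rw [hov, hEv, cond_univ] at hkey
  exact hkey
end

section
/- Let E be a finite set, p, ε ∈ [0,1], and set q = p(1−ε). Let (M, F, ρ) be a probability space and ν = μ_p ⊗ ρ on {0,1}^E × M, where μ_p is the product Bernoulli(p) measure. Fix an exploration of E and a measurable set A ⊆ {0,1}^E × M with ν[A] > 0. Suppose that for every k ∈ {0,…,|E|−1} and every exploration history (e,x) with ν[A ∩ Expl(e,x)] > 0, one has ν[e_{k+1} is pivotal for A | A ∩ Expl_k(e,x)] ≤ ε. Then the product Bernoulli(q) measure on {0,1}^E is stochastically dominated by the marginal on {0,1}^E of ν[· | A]. -/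
open MeasureTheory ProbabilityTheory
open scoped ENNReal

/-- A coordinate `a ∈ E` is pivotal for `A ⊆ {0,1}^E × M` at `(ω, η)` if flipping only the
coordinate `a` of `ω` (keeping `η` fixed) changes membership in `A`. -/
def Pivotal {E : Type*} [DecidableEq E] {M : Type*} (A : Set ((E → Bool) × M)) (a : E)
    (z : (E → Bool) × M) : Prop :=
  ¬ (((Function.update z.1 a (! z.1 a), z.2) ∈ A) ↔ z ∈ A)

namespace EPD
set_option linter.unusedSectionVars false
open Finset
variable {E : Type*} [Fintype E] [DecidableEq E]

noncomputable def wt (r : ℝ≥0∞) (x : E → Bool) : ℝ≥0∞ := ∏ e, if x e then r else 1 - r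

lemma measurableSet_all (S : Set (E → Bool)) : MeasurableSet S := .of_discrete

instance (p : ℝ≥0∞) : IsProbabilityMeasure (bernB p) := by
  unfold bernB; infer_instance

instance (p : ℝ≥0∞) : IsProbabilityMeasure (prodBern E p) := by
  unfold prodBern; infer_instance

lemma bernB_singleton {r : ℝ≥0∞} (hr : r ≤ 1) (b : Bool) :
    bernB r {b} = if b then r else 1 - r := by
  rw [bernB, PMF.toMeasure_apply_singleton _ _ (measurableSet_singleton b)]
  have hr' : min r 1 = r := min_eq_left hr
  cases b <;> simp [PMF.bernoulli, hr', ENNReal.coe_toNNReal (ne_top_of_le_ne_top ENNReal.one_ne_top hr)]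

lemma prodBern_singleton {r : ℝ≥0∞} (hr : r ≤ 1) (x : E → Bool) :
    prodBern E r {x} = wt r x := by
  rw [prodBern, ← Set.univ_pi_singleton x, Measure.pi_pi, wt]
  exact Finset.prod_congr rfl fun e _ => bernB_singleton hr (x e)

lemma prodBern_finset {r : ℝ≥0∞} (hr : r ≤ 1) (s : Finset (E → Bool)) :
    prodBern E r ↑s = ∑ x ∈ s, wt r x := by
  have : (↑s : Set (E → Bool)) = ⋃ x ∈ s, {x} := by
    ext y; simp
  rw [this, measure_biUnion_finset ?_ (fun x _ => measurableSet_all _)]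
  · exact Finset.sum_congr rfl fun x _ => prodBern_singleton hr x
  · intro x _ y _ hxy
    simp [Function.onFun, Set.disjoint_singleton, hxy]

lemma sum_wt_univ {r : ℝ≥0∞} (hr : r ≤ 1) : ∑ x : E → Bool, wt r x = 1 := by
  have := prodBern_finset (E := E) hr Finset.univ
  simpa using this.symm

lemma wt_le_one {r : ℝ≥0∞} (hr : r ≤ 1) (x : E → Bool) : wt r x ≤ 1 := by
  refine Finset.prod_le_one (fun e _ => zero_le) (fun e _ => ?_)
  split
  · exact hr
  · exact tsub_le_self

variable {M : Type*} [MeasurableSpace M]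

lemma nu_slice (ρ : Measure M) [SigmaFinite ρ] {p : ℝ≥0∞} (hp : p ≤ 1)
    (S : Finset (E → Bool)) (Z : Set ((E → Bool) × M))
    (hZ : ∀ x, MeasurableSet {η | (x, η) ∈ Z}) :
    ((prodBern E p).prod ρ) ((↑S ×ˢ (Set.univ : Set M)) ∩ Z)
      = ∑ x ∈ S, wt p x * ρ {η | (x, η) ∈ Z} := by
  have hdecomp : (↑S ×ˢ (Set.univ : Set M)) ∩ Z
      = ⋃ x ∈ S, ({x} ×ˢ {η | (x, η) ∈ Z}) := by
    ext ⟨w, η⟩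
    simp only [Set.mem_inter_iff, Set.mem_prod, Set.mem_iUnion, Set.mem_singleton_iff,
      Set.mem_setOf_eq, Set.mem_univ, and_true, Finset.mem_coe]
    constructor
    · rintro ⟨hw, hz⟩; exact ⟨w, hw, rfl, hz⟩
    · rintro ⟨x, hx, rfl, hz⟩; exact ⟨hx, hz⟩
  rw [hdecomp, measure_biUnion_finset]
  · exact Finset.sum_congr rfl fun x _ => by
      rw [Measure.prod_prod, prodBern_singleton hp]
  · intro x _ y _ hxy
    refine Set.disjoint_left.2 ?_
    rintro ⟨w, η⟩ ⟨hw, _⟩ ⟨hw', _⟩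
    exact hxy ((Set.eq_of_mem_singleton hw).symm.trans (Set.eq_of_mem_singleton hw'))
  · exact fun x _ => (measurableSet_all _).prod (hZ x)


lemma weight_update (r : ℝ≥0∞) (y : E → Bool) (a : E) (b : Bool) :
    wt r (Function.update y a b) * (if y a then r else 1 - r)
      = wt r y * (if b then r else 1 - r) := by
  have h1 : wt r y = (if y a then r else 1 - r) * ∏ e ∈ univ.erase a, (if y e then r else 1 - r) :=
    (Finset.mul_prod_erase univ _ (mem_univ a)).symm
  have h2 : wt r (Function.update y a b)
      = (if b then r else 1 - r) * ∏ e ∈ univ.erase a, (if y e then r else 1 - r) := by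
    rw [wt, ← Finset.mul_prod_erase univ _ (mem_univ a), Function.update_self]
    congr 1
    exact Finset.prod_congr rfl fun e he => by
      rw [Function.update_of_ne (Finset.ne_of_mem_erase he)]
  rw [h1, h2]; ring

lemma sum_flip_filter (a : E) (s : Finset (E → Bool))
    (hs : ∀ x ∈ s, ∀ b, Function.update x a b ∈ s) (f : (E → Bool) → ℝ≥0∞) :
    ∑ y ∈ s.filter (fun y => y a = false), f y
      = ∑ y ∈ s.filter (fun y => y a = true), f (Function.update y a false) := by
  refine Finset.sum_nbij' (i := fun y => Function.update y a true)
    (j := fun y => Function.update y a false) ?_ ?_ ?_ ?_ ?_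
  · intro y hy
    simp only [mem_filter] at hy ⊢
    exact ⟨hs y hy.1 true, Function.update_self _ _ _⟩
  · intro y hy
    simp only [mem_filter] at hy ⊢
    exact ⟨hs y hy.1 false, Function.update_self _ _ _⟩
  · intro y hy
    simp only [mem_filter] at hy
    show Function.update (Function.update y a true) a false = y
    rw [Function.update_idem, ← hy.2, Function.update_eq_self]
  · intro y hy
    simp only [mem_filter] at hy
    show Function.update (Function.update y a false) a true = y
    rw [Function.update_idem, ← hy.2, Function.update_eq_self]
  · intro y hy
    show f y = f (Function.update (Function.update y a true) a false)
    simp only [mem_filter] at hy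
    rw [Function.update_idem, ← hy.2, Function.update_eq_self]

lemma pairing {r : ℝ≥0∞} (a : E) (φ : (E → Bool) → ℝ≥0∞)
    (hφ : ∀ y b, φ (Function.update y a b) = φ y) :
    (1 - r) * ∑ y ∈ univ.filter (fun y => y a = true), wt r y * φ y
      = r * ∑ y ∈ univ.filter (fun y => y a = false), wt r y * φ y := by
  rw [Finset.mul_sum, Finset.mul_sum,
    sum_flip_filter a univ (fun x _ b => mem_univ _) (fun y => r * (wt r y * φ y))]
  refine Finset.sum_congr rfl fun y hy => ?_
  simp only [mem_filter] at hy
  have hw := weight_update r y a false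
  rw [hy.2] at hw
  have h1 : (if (true : Bool) = true then r else 1 - r) = r := rfl
  have h2 : (if (false : Bool) = true then r else 1 - r) = 1 - r := rfl
  rw [h1, h2] at hw
  rw [hφ y false]
  calc (1 - r) * (wt r y * φ y) = wt r y * (1 - r) * φ y := by ring
  _ = wt r (Function.update y a false) * r * φ y := by rw [hw]
  _ = r * (wt r (Function.update y a false) * φ y) := by ring

lemma sum_wt_true {r : ℝ≥0∞} (hr : r ≤ 1) (a : E) (φ : (E → Bool) → ℝ≥0∞)
    (hφ : ∀ y b, φ (Function.update y a b) = φ y) :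
    ∑ y ∈ univ.filter (fun y => y a = true), wt r y * φ y
      = r * ∑ y : E → Bool, wt r y * φ y := by
  have hsplit : ∑ y : E → Bool, wt r y * φ y
      = (∑ y ∈ univ.filter (fun y => y a = true), wt r y * φ y)
        + ∑ y ∈ univ.filter (fun y => y a = false), wt r y * φ y := by
    rw [← Finset.sum_filter_add_sum_filter_not univ (fun y => y a = true)]
    congr 1
    exact Finset.sum_congr (by simp) fun _ _ => rfl
  rw [hsplit, mul_add, ← pairing a φ hφ, ← add_mul, add_tsub_cancel_of_le hr, one_mul]

lemma sum_wt_false {r : ℝ≥0∞} (hr : r ≤ 1) (a : E) (φ : (E → Bool) → ℝ≥0∞)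
    (hφ : ∀ y b, φ (Function.update y a b) = φ y) :
    ∑ y ∈ univ.filter (fun y => y a = false), wt r y * φ y
      = (1 - r) * ∑ y : E → Bool, wt r y * φ y := by
  have hsplit : ∑ y : E → Bool, wt r y * φ y
      = (∑ y ∈ univ.filter (fun y => y a = true), wt r y * φ y)
        + ∑ y ∈ univ.filter (fun y => y a = false), wt r y * φ y := by
    rw [← Finset.sum_filter_add_sum_filter_not univ (fun y => y a = true)]
    congr 1
    exact Finset.sum_congr (by simp) fun _ _ => rfl
  rw [hsplit, mul_add, pairing a φ hφ, ← add_mul, add_tsub_cancel_of_le hr, one_mul]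


section Expl
variable (expl : Exploration E) {k : ℕ} {e : Fin (Fintype.card E) → E} {x0 : E → Bool}

lemma self_mem (ω : E → Bool) (k : ℕ) : ω ∈ ExplEvent expl k (expl.order ω) ω :=
  fun _ _ => ⟨rfl, rfl⟩

lemma next_const (hk : k < Fintype.card E) {ω ω' : E → Bool}
    (hω : ω ∈ ExplEvent expl k e x0) (hω' : ω' ∈ ExplEvent expl k e x0) :
    expl.order ω ⟨k, hk⟩ = expl.order ω' ⟨k, hk⟩ := by
  refine expl.adapted ω ω' ⟨k, hk⟩ fun j hj => ?_
  have hj' : (j : ℕ) < k := hj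
  obtain ⟨h1, h2⟩ := hω j hj'
  obtain ⟨h1', h2'⟩ := hω' j hj'
  exact ⟨h1.trans h1'.symm, by rw [h1, h2, h2']⟩

lemma hist_congr {e' : Fin (Fintype.card E) → E} {x0' : E → Bool}
    (h : ∀ j : Fin (Fintype.card E), (j : ℕ) < k → e j = e' j ∧ x0 (e j) = x0' (e j)) :
    ExplEvent expl k e x0 = ExplEvent expl k e' x0' := by
  ext ω
  constructor <;> intro hω j hj
  · obtain ⟨he, hx⟩ := h j hj
    obtain ⟨h1, h2⟩ := hω j hj
    exact ⟨h1.trans he, by rw [← he, h2, hx]⟩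
  · obtain ⟨he, hx⟩ := h j hj
    obtain ⟨h1, h2⟩ := hω j hj
    exact ⟨by rw [h1, he], by rw [he, h2, ← he]; exact hx.symm⟩

lemma flip_mem {ω : E → Bool} (hω : ω ∈ ExplEvent expl k e x0) {a : E}
    (ha : ∀ j : Fin (Fintype.card E), (j : ℕ) < k → e j ≠ a) (b : Bool) :
    Function.update ω a b ∈ ExplEvent expl k e x0 := by
  set ω' := Function.update ω a b with hω'def
  have key : ∀ m, ∀ (hmn : m < Fintype.card E), m < k →
      expl.order ω' ⟨m, hmn⟩ = e ⟨m, hmn⟩ := by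
    intro m
    induction m using Nat.strong_induction_on with
    | _ m ih =>
      intro hmn hmk
      have : expl.order ω' ⟨m, hmn⟩ = expl.order ω ⟨m, hmn⟩ := by
        refine expl.adapted ω' ω ⟨m, hmn⟩ fun j hj => ?_
        have hjm : (j : ℕ) < m := hj
        have hje : expl.order ω' j = e j := by
          have := ih j hjm j.2 (hjm.trans hmk)
          simpa using this
        have hjω : expl.order ω j = e j := (hω j (hjm.trans hmk)).1
        refine ⟨hje.trans hjω.symm, ?_⟩
        rw [hje, hω'def, Function.update_of_ne (ha j (hjm.trans hmk))]
      rw [this, (hω ⟨m, hmn⟩ hmk).1]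
  intro j hj
  refine ⟨by simpa using key j j.2 hj, ?_⟩
  rw [hω'def, Function.update_of_ne (ha j hj), (hω j hj).2]

lemma order_ne {ω : E → Bool} (hk : k < Fintype.card E) (hω : ω ∈ ExplEvent expl k e x0)
    (j : Fin (Fintype.card E)) (hj : (j : ℕ) < k) :
    e j ≠ expl.order ω ⟨k, hk⟩ := by
  rw [← (hω j hj).1]
  intro hcon
  have := (expl.bij ω).1 hcon
  rw [this] at hj
  simp at hj

lemma branch (hk : k < Fintype.card E) {a : E}
    (hconst : ∀ ω ∈ ExplEvent expl k e x0, expl.order ω ⟨k, hk⟩ = a)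
    (hne : ∀ j : Fin (Fintype.card E), (j : ℕ) < k → e j ≠ a) (b : Bool) :
    ExplEvent expl (k + 1) (Function.update e ⟨k, hk⟩ a) (Function.update x0 a b)
      = ExplEvent expl k e x0 ∩ {ω | ω a = b} := by
  ext ω
  constructor
  · intro hω
    have hmem : ω ∈ ExplEvent expl k e x0 := by
      intro j hj
      have hj1 : (j : ℕ) < k + 1 := hj.trans (Nat.lt_succ_self k)
      obtain ⟨h1, h2⟩ := hω j hj1
      have hne' : j ≠ (⟨k, hk⟩ : Fin (Fintype.card E)) := by
        intro hcon; rw [hcon] at hj; simp at hj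
      rw [Function.update_of_ne hne'] at h1 h2
      rw [Function.update_of_ne (hne j hj)] at h2
      exact ⟨h1, h2⟩
    refine ⟨hmem, ?_⟩
    obtain ⟨h1, h2⟩ := hω ⟨k, hk⟩ (Nat.lt_succ_self k)
    rw [Function.update_self] at h1 h2
    rw [Function.update_self] at h2
    exact h2
  · rintro ⟨hmem, hab⟩
    intro j hj
    rcases Nat.lt_succ_iff_lt_or_eq.1 hj with hjk | hjk
    · obtain ⟨h1, h2⟩ := hmem j hjk
      have hne' : j ≠ (⟨k, hk⟩ : Fin (Fintype.card E)) := by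
        intro hcon; rw [hcon] at hjk; simp at hjk
      rw [Function.update_of_ne hne', Function.update_of_ne (hne j hjk)]
      exact ⟨h1, h2⟩
    · have : j = (⟨k, hk⟩ : Fin (Fintype.card E)) := Fin.ext hjk
      subst this
      rw [Function.update_self, Function.update_self]
      exact ⟨hconst ω hmem, hab⟩

lemma full_eq {ω : E → Bool} (hω : ω ∈ ExplEvent expl (Fintype.card E) e x0) : ω = x0 := by
  funext i
  obtain ⟨j, hj⟩ := (expl.bij ω).2 i
  have := hω j j.2
  rw [this.1] at hj
  rw [← hj]
  exact this.2


end Expl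

open Classical in
noncomputable def EkF (expl : Exploration E) (k : ℕ) (e : Fin (Fintype.card E) → E)
    (x0 : E → Bool) : Finset (E → Bool) :=
  Finset.univ.filter (· ∈ ExplEvent expl k e x0)

@[simp] lemma mem_EkF {expl : Exploration E} {k e x0} {y : E → Bool} :
    y ∈ EkF expl k e x0 ↔ y ∈ ExplEvent expl k e x0 := by
  simp [EkF]

lemma EkF_coe (expl : Exploration E) (k e x0) :
    ↑(EkF expl k e x0) = ExplEvent expl k e x0 := by
  ext y; simp

def RF (k : ℕ) (e : Fin (Fintype.card E) → E) : Finset E :=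
  (Finset.univ.filter fun j : Fin (Fintype.card E) => (j : ℕ) < k).image e

noncomputable def mergeF (k : ℕ) (e : Fin (Fintype.card E) → E) (x0 : E → Bool)
    (y : E → Bool) : E → Bool :=
  fun i => if i ∈ RF k e then x0 i else y i

lemma mem_RF {k : ℕ} {e : Fin (Fintype.card E) → E} {i : E} :
    i ∈ RF k e ↔ ∃ j : Fin (Fintype.card E), (j : ℕ) < k ∧ e j = i := by
  simp [RF]

lemma RF_succ {k : ℕ} (hk : k < Fintype.card E) (e : Fin (Fintype.card E) → E) (a : E) :
    RF (k + 1) (Function.update e ⟨k, hk⟩ a) = insert a (RF k e) := by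
  unfold RF
  have h1 : (Finset.univ.filter fun j : Fin (Fintype.card E) => (j : ℕ) < k + 1)
      = insert ⟨k, hk⟩ (Finset.univ.filter fun j : Fin (Fintype.card E) => (j : ℕ) < k) := by
    ext j
    simp only [Finset.mem_filter, Finset.mem_insert, Finset.mem_univ, true_and, Fin.ext_iff]
    omega
  rw [h1, Finset.image_insert, Function.update_self]
  congr 1
  refine Finset.image_congr fun j hj => ?_
  simp only [Finset.coe_filter, Set.mem_setOf_eq, Finset.mem_univ, true_and] at hj
  exact Function.update_of_ne (by simp only [ne_eq, Fin.ext_iff]; omega) _ _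

lemma main_ind (expl : Exploration E) {p ε q : ℝ≥0∞} (hp : p ≤ 1) (hε : ε ≤ 1)
    (hq : q = p * (1 - ε)) (hq1 : q ≤ 1)
    (aA : (E → Bool) → ℝ≥0∞) (dA : E → (E → Bool) → ℝ≥0∞)
    (haA : ∀ x, aA x ≤ 1)
    (hsub : ∀ (a : E) (x : E → Bool), aA x ≤ aA (Function.update x a (! x a)) + dA a x)
    (hH : ∀ (k : ℕ) (hk : k < Fintype.card E) (e : Fin (Fintype.card E) → E) (x0 : E → Bool)
      (ω : E → Bool), ω ∈ ExplEvent expl k e x0 → wt p ω * aA ω ≠ 0 →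
      ∑ x ∈ EkF expl k e x0, wt p x * dA (expl.order ω ⟨k, hk⟩) x
        ≤ ε * ∑ x ∈ EkF expl k e x0, wt p x * aA x)
    (χ : (E → Bool) → ℝ≥0∞) (hχ1 : ∀ x, χ x ≤ 1)
    (hχm : ∀ x y : E → Bool, (∀ i, x i ≤ y i) → χ x ≤ χ y) :
    ∀ (m k : ℕ), k ≤ Fintype.card E → Fintype.card E - k = m →
      ∀ (e : Fin (Fintype.card E) → E) (x0 : E → Bool),
      (∑ x ∈ EkF expl k e x0, wt p x * aA x) ≠ 0 →
      (∑ y : E → Bool, wt q y * χ (mergeF k e x0 y)) * (∑ x ∈ EkF expl k e x0, wt p x * aA x)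
        ≤ ∑ x ∈ EkF expl k e x0, wt p x * aA x * χ x := by
  have hsum_le : ∀ s : Finset (E → Bool), (∑ x ∈ s, wt p x * aA x) ≤ 1 := by
    intro s
    calc ∑ x ∈ s, wt p x * aA x ≤ ∑ x ∈ s, wt p x :=
          Finset.sum_le_sum fun x _ => mul_le_of_le_one_right' (haA x)
    _ ≤ ∑ x : E → Bool, wt p x := Finset.sum_le_sum_of_subset (Finset.subset_univ s)
    _ = 1 := sum_wt_univ hp
  intro m
  induction m with
  | zero =>
    intro k hk hm e x0 hT
    have hkn : k = Fintype.card E := by omega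
    subst hkn
    obtain ⟨ω, hωs, hωne⟩ := Finset.exists_ne_zero_of_sum_ne_zero hT
    have hωmem : ω ∈ ExplEvent expl (Fintype.card E) e x0 := mem_EkF.1 hωs
    have hωx0 : ω = x0 := full_eq expl hωmem
    subst hωx0
    have hsingle : EkF expl (Fintype.card E) e ω = {ω} := by
      ext y
      simp only [mem_EkF, Finset.mem_singleton]
      exact ⟨fun h => full_eq expl h, fun h => h ▸ hωmem⟩
    have hRuniv : RF (Fintype.card E) e = Finset.univ := by
      ext i
      simp only [mem_RF, Finset.mem_univ, iff_true]
      obtain ⟨j, hj⟩ := (expl.bij ω).2 i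
      exact ⟨j, j.2, by rw [← (hωmem j j.2).1, hj]⟩
    have hmerge : ∀ y, mergeF (Fintype.card E) e ω y = ω := by
      intro y; funext i
      rw [mergeF, if_pos (hRuniv ▸ Finset.mem_univ i)]
    have hG : (∑ y : E → Bool, wt q y * χ (mergeF (Fintype.card E) e ω y)) = χ ω := by
      calc ∑ y : E → Bool, wt q y * χ (mergeF (Fintype.card E) e ω y)
          = ∑ y : E → Bool, wt q y * χ ω := by
            refine Finset.sum_congr rfl fun y _ => by rw [hmerge y]
      _ = (∑ y : E → Bool, wt q y) * χ ω := by rw [Finset.sum_mul]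
      _ = χ ω := by rw [sum_wt_univ hq1, one_mul]
    rw [hG, hsingle, Finset.sum_singleton, Finset.sum_singleton, mul_comm, mul_assoc]
  | succ m ih =>
    intro k hk hm e x0 hT
    have hklt : k < Fintype.card E := by omega
    set s := EkF expl k e x0 with hs
    set T := ∑ x ∈ s, wt p x * aA x with hTdef
    obtain ⟨ω, hωs, hωne⟩ := Finset.exists_ne_zero_of_sum_ne_zero hT
    have hωmem : ω ∈ ExplEvent expl k e x0 := mem_EkF.1 hωs
    set a := expl.order ω ⟨k, hklt⟩ with ha
    have hne : ∀ j : Fin (Fintype.card E), (j : ℕ) < k → e j ≠ a :=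
      fun j hj => order_ne expl hklt hωmem j hj
    have hconst : ∀ ω' ∈ ExplEvent expl k e x0, expl.order ω' ⟨k, hklt⟩ = a :=
      fun ω' h => next_const expl hklt h hωmem
    have hclosed : ∀ x ∈ s, ∀ b, Function.update x a b ∈ s := by
      intro x hx b
      exact mem_EkF.2 (flip_mem expl (mem_EkF.1 hx) hne b)
    set e' := Function.update e ⟨k, hklt⟩ a with he'
    have hbranch : ∀ b : Bool, EkF expl (k + 1) e' (Function.update x0 a b)
        = s.filter (fun y => y a = b) := by
      intro b
      ext y
      simp only [mem_EkF, Finset.mem_filter, hs, he',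
        branch expl hklt hconst hne b, Set.mem_inter_iff, Set.mem_setOf_eq]
    set T1 := ∑ x ∈ s.filter (fun y => y a = true), wt p x * aA x with hT1
    set T0 := ∑ x ∈ s.filter (fun y => y a = false), wt p x * aA x with hT0
    have hfilter_neg : s.filter (fun y => ¬ (y a = true)) = s.filter (fun y => y a = false) := by
      refine Finset.filter_congr fun y _ => ?_
      simp [Bool.not_eq_true]
    have hsplitT : T = T1 + T0 := by
      rw [hTdef, ← Finset.sum_filter_add_sum_filter_not s (fun y => y a = true), hfilter_neg]
    -- Step B : q * T ≤ T1
    have hD : ∑ x ∈ s, wt p x * dA a x ≤ ε * T := hH k hklt e x0 ω hωmem hωne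
    have hpair : ∑ x ∈ s.filter (fun y => y a = false), p * (wt p x * aA (Function.update x a true))
        = (1 - p) * T1 := by
      rw [sum_flip_filter a s hclosed (fun z => p * (wt p z * aA (Function.update z a true))),
        hT1, Finset.mul_sum]
      refine Finset.sum_congr rfl fun y hy => ?_
      simp only [Finset.mem_filter] at hy
      have hupd : Function.update (Function.update y a false) a true = y := by
        rw [Function.update_idem, ← hy.2, Function.update_eq_self]
      have hw := weight_update p y a false
      rw [hy.2] at hw
      have e1 : (if (true : Bool) = true then p else 1 - p) = p := rfl
      have e2 : (if (false : Bool) = true then p else 1 - p) = 1 - p := rfl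
      rw [e1, e2] at hw
      rw [hupd]
      calc p * (wt p (Function.update y a false) * aA y)
          = wt p (Function.update y a false) * p * aA y := by ring
      _ = wt p y * (1 - p) * aA y := by rw [hw]
      _ = (1 - p) * (wt p y * aA y) := by ring
    have hp0 : p * T0 ≤ (1 - p) * T1 + p * (ε * T) := by
      have step1 : p * T0 ≤ ∑ x ∈ s.filter (fun y => y a = false),
          (p * (wt p x * aA (Function.update x a true)) + p * (wt p x * dA a x)) := by
        rw [hT0, Finset.mul_sum]
        refine Finset.sum_le_sum fun x hx => ?_
        simp only [Finset.mem_filter] at hx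
        have hx' := hsub a x
        rw [hx.2] at hx'
        have : (!false) = true := rfl
        rw [this] at hx'
        calc p * (wt p x * aA x)
            ≤ p * (wt p x * (aA (Function.update x a true) + dA a x)) := by
              exact mul_le_mul_right (mul_le_mul_right hx' _) _
        _ = p * (wt p x * aA (Function.update x a true)) + p * (wt p x * dA a x) := by ring
      rw [Finset.sum_add_distrib, hpair] at step1
      refine step1.trans (add_le_add_right ?_ _)
      rw [← Finset.mul_sum]
      refine mul_le_mul_right ?_ _
      refine le_trans (Finset.sum_le_sum_of_subset (Finset.filter_subset _ _)) ?_
      exact hD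
    have hqT : q * T ≤ T1 := by
      have hpT : p * T ≤ T1 + p * (ε * T) := by
        calc p * T = p * T1 + p * T0 := by rw [hsplitT]; ring
        _ ≤ p * T1 + ((1 - p) * T1 + p * (ε * T)) := add_le_add_right hp0 _
        _ = (p + (1 - p)) * T1 + p * (ε * T) := by ring
        _ = T1 + p * (ε * T) := by rw [add_tsub_cancel_of_le hp, one_mul]
      have hqpe : q * T + p * (ε * T) = p * T := by
        have : q + p * ε = p := by
          rw [hq, ← mul_add, tsub_add_cancel_of_le hε, mul_one]
        calc q * T + p * (ε * T) = (q + p * ε) * T := by ring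
        _ = p * T := by rw [this]
      have hfin : p * (ε * T) ≠ ∞ := by
        have : p * (ε * T) ≤ 1 := by
          refine mul_le_one' hp (mul_le_one' hε (hsum_le _))
        exact ne_top_of_le_ne_top ENNReal.one_ne_top this
      have := hqpe.le.trans hpT
      exact (WithTop.add_le_add_iff_right hfin).1 this
    -- branches and IH
    set x1 := Function.update x0 a true with hx1
    set x00 := Function.update x0 a false with hx00
    set G1 := ∑ y : E → Bool, wt q y * χ (mergeF (k + 1) e' x1 y) with hG1
    set G0 := ∑ y : E → Bool, wt q y * χ (mergeF (k + 1) e' x00 y) with hG0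
    set F1 := ∑ x ∈ s.filter (fun y => y a = true), wt p x * aA x * χ x with hF1
    set F0 := ∑ x ∈ s.filter (fun y => y a = false), wt p x * aA x * χ x with hF0
    have hFle : ∀ t : Finset (E → Bool), (∑ x ∈ t, wt p x * aA x * χ x) ≤ ∑ x ∈ t, wt p x * aA x :=
      fun t => Finset.sum_le_sum fun x _ => mul_le_of_le_one_right' (hχ1 x)
    have hIH : ∀ b : Bool,
        (∑ y : E → Bool, wt q y * χ (mergeF (k + 1) e' (Function.update x0 a b) y)) *
          (∑ x ∈ s.filter (fun y => y a = b), wt p x * aA x)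
        ≤ ∑ x ∈ s.filter (fun y => y a = b), wt p x * aA x * χ x := by
      intro b
      by_cases hTb : (∑ x ∈ s.filter (fun y => y a = b), wt p x * aA x) = 0
      · rw [hTb, mul_zero]
        exact zero_le
      · have := ih (k + 1) (by omega) (by omega) e' (Function.update x0 a b)
          (by rw [hbranch b]; exact hTb)
        rw [hbranch b] at this
        exact this
    have hIH1 := hIH true
    have hIH0 := hIH false
    rw [← hx1, ← hG1, ← hT1, ← hF1] at hIH1
    rw [← hx00, ← hG0, ← hT0, ← hF0] at hIH0
    -- RF facts
    have hRsucc : RF (k + 1) e' = insert a (RF k e) := RF_succ hklt e a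
    have haR : a ∉ RF k e := by
      rw [mem_RF]
      rintro ⟨j, hj, hje⟩
      exact hne j hj hje
    have hmerge_indep : ∀ (z y : E → Bool) (c : Bool),
        mergeF (k + 1) e' z (Function.update y a c) = mergeF (k + 1) e' z y := by
      intro z y c
      funext i
      rw [mergeF, mergeF]
      by_cases hi : i ∈ RF (k + 1) e'
      · rw [if_pos hi, if_pos hi]
      · rw [if_neg hi, if_neg hi]
        have hia : i ≠ a := by
          intro hcon
          apply hi
          rw [hRsucc, hcon]
          exact Finset.mem_insert_self a _
        rw [Function.update_of_ne hia]
    have hmerge_eq : ∀ (b : Bool) (y : E → Bool), y a = b →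
        mergeF (k + 1) e' (Function.update x0 a b) y = mergeF k e x0 y := by
      intro b y hyb
      funext i
      rw [mergeF, mergeF, hRsucc]
      by_cases hia : i = a
      · rw [hia, if_pos (Finset.mem_insert_self a _), if_neg haR, Function.update_self]
        exact hyb.symm
      · by_cases hiR : i ∈ RF k e
        · rw [if_pos (Finset.mem_insert_of_mem hiR), if_pos hiR, Function.update_of_ne hia]
        · have hni : i ∉ insert a (RF k e) := by
            simp only [Finset.mem_insert]
            tauto
          rw [if_neg hni, if_neg hiR]
    have hGrec : (∑ y : E → Bool, wt q y * χ (mergeF k e x0 y)) = q * G1 + (1 - q) * G0 := by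
      have hsplit : (∑ y : E → Bool, wt q y * χ (mergeF k e x0 y))
          = (∑ y ∈ Finset.univ.filter (fun y => y a = true), wt q y * χ (mergeF k e x0 y))
            + ∑ y ∈ Finset.univ.filter (fun y => y a = false), wt q y * χ (mergeF k e x0 y) := by
        rw [← Finset.sum_filter_add_sum_filter_not Finset.univ (fun y => y a = true)]
        congr 1
        refine Finset.sum_congr (Finset.filter_congr fun y _ => by simp [Bool.not_eq_true]) ?_
        exact fun _ _ => rfl
      have htrue : (∑ y ∈ Finset.univ.filter (fun y => y a = true), wt q y * χ (mergeF k e x0 y))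
          = q * G1 := by
        have : ∀ y ∈ Finset.univ.filter (fun y : E → Bool => y a = true),
            wt q y * χ (mergeF k e x0 y) = wt q y * χ (mergeF (k + 1) e' x1 y) := by
          intro y hy
          simp only [Finset.mem_filter] at hy
          rw [hx1, hmerge_eq true y hy.2]
        rw [Finset.sum_congr rfl this, hG1,
          sum_wt_true hq1 a (fun y => χ (mergeF (k + 1) e' x1 y))
            (fun y c => congrArg χ (hmerge_indep x1 y c))]
      have hfalse : (∑ y ∈ Finset.univ.filter (fun y => y a = false), wt q y * χ (mergeF k e x0 y))
          = (1 - q) * G0 := by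
        have : ∀ y ∈ Finset.univ.filter (fun y : E → Bool => y a = false),
            wt q y * χ (mergeF k e x0 y) = wt q y * χ (mergeF (k + 1) e' x00 y) := by
          intro y hy
          simp only [Finset.mem_filter] at hy
          rw [hx00, hmerge_eq false y hy.2]
        rw [Finset.sum_congr rfl this, hG0,
          sum_wt_false hq1 a (fun y => χ (mergeF (k + 1) e' x00 y))
            (fun y c => congrArg χ (hmerge_indep x00 y c))]
      rw [hsplit, htrue, hfalse]
    have hG01 : G0 ≤ G1 := by
      rw [hG0, hG1]
      refine Finset.sum_le_sum fun y _ => mul_le_mul_right (hχm _ _ fun i => ?_) _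
      rw [mergeF, mergeF]
      by_cases hi : i ∈ RF (k + 1) e'
      · rw [if_pos hi, if_pos hi, hx00, hx1]
        by_cases hia : i = a
        · subst hia
          rw [Function.update_self, Function.update_self]
          exact Bool.false_le _
        · rw [Function.update_of_ne hia, Function.update_of_ne hia]
      · rw [if_neg hi, if_neg hi]
    have hG1le : G1 ≤ 1 := by
      rw [hG1]
      calc ∑ y : E → Bool, wt q y * χ (mergeF (k + 1) e' x1 y)
          ≤ ∑ y : E → Bool, wt q y := Finset.sum_le_sum fun y _ => mul_le_of_le_one_right' (hχ1 _)
      _ = 1 := sum_wt_univ hq1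
    have hsplitF : (∑ x ∈ s, wt p x * aA x * χ x) = F1 + F0 := by
      rw [← Finset.sum_filter_add_sum_filter_not s (fun y => y a = true), hfilter_neg]
    -- final arithmetic
    have hfinqT : q * T ≠ ∞ := by
      have : q * T ≤ 1 := mul_le_one' hq1 (hsum_le _)
      exact ne_top_of_le_ne_top ENNReal.one_ne_top this
    set r := T1 - q * T with hr
    have key1 : T1 = q * T + r := (add_tsub_cancel_of_le hqT).symm
    have key2 : (1 - q) * T ≤ r + T0 := by
      have h4 : q * T + (1 - q) * T = q * T + (r + T0) := by
        rw [← add_mul, add_tsub_cancel_of_le hq1, one_mul, ← add_assoc, ← key1, ← hsplitT]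
      exact le_of_eq (WithTop.add_left_cancel hfinqT h4)
    calc (∑ y : E → Bool, wt q y * χ (mergeF k e x0 y)) * T
        = (q * G1 + (1 - q) * G0) * T := by rw [hGrec]
    _ = G1 * (q * T) + G0 * ((1 - q) * T) := by ring
    _ ≤ G1 * (q * T) + G0 * (r + T0) := add_le_add_right (mul_le_mul_right key2 _) _
    _ = G1 * (q * T) + (G0 * r + G0 * T0) := by ring
    _ ≤ G1 * (q * T) + (G1 * r + G0 * T0) :=
        add_le_add_right (add_le_add_left (mul_le_mul_left hG01 _) _) _
    _ = G1 * (q * T + r) + G0 * T0 := by ring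
    _ = G1 * T1 + G0 * T0 := by rw [← key1]
    _ ≤ F1 + F0 := add_le_add hIH1 hIH0
    _ = ∑ x ∈ s, wt p x * aA x * χ x := hsplitF.symm


end EPD

/-- If conditionally on `A` and on any exploration history compatible with `A`, the
probability that the next queried coordinate is pivotal for `A` is at most `ε`, then the
product Bernoulli measure of parameter `q = p(1-ε)` is stochastically dominated by the
marginal on `{0,1}^E` of `ν[·|A]`, where `ν = μ_p ⊗ ρ`. -/
theorem exploration_pivotal_domination {E : Type*} [Fintype E] [DecidableEq E]
    {M : Type*} [MeasurableSpace M]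
    (p ε : ℝ≥0∞) (hp : p ≤ 1) (hε : ε ≤ 1) (q : ℝ≥0∞) (hq : q = p * (1 - ε))
    (ρ : Measure M) [IsProbabilityMeasure ρ]
    (ν : Measure ((E → Bool) × M)) (hν : ν = (prodBern E p).prod ρ)
    (expl : Exploration E)
    (A : Set ((E → Bool) × M)) (hAmeas : MeasurableSet A) (hApos : ν A ≠ 0)
    (H : ∀ (k : Fin (Fintype.card E)) (e : Fin (Fintype.card E) → E) (x : E → Bool),
      ν (A ∩ (ExplEvent expl (Fintype.card E) e x) ×ˢ Set.univ) ≠ 0 →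
      ν[|A ∩ (ExplEvent expl (k : ℕ) e x) ×ˢ Set.univ] {z | Pivotal A (e k) z} ≤ ε)
    (B : Set (E → Bool)) (hB : IncreasingSet B) :
    prodBern E q B ≤ (ν[|A]).map Prod.fst B := by
  classical
  subst hν
  set ν := (prodBern E p).prod ρ with hν
  set n := Fintype.card E with hn
  have hq1 : q ≤ 1 := by
    rw [hq]
    calc p * (1 - ε) ≤ 1 * 1 := mul_le_mul' hp tsub_le_self
    _ = 1 := one_mul 1
  set aA : (E → Bool) → ℝ≥0∞ := fun x => ρ {η | (x, η) ∈ A} with haA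
  set dA : E → (E → Bool) → ℝ≥0∞ :=
    fun a x => ρ ({η | (x, η) ∈ A} \ {η | (Function.update x a (! x a), η) ∈ A}) with hdA
  set χ : (E → Bool) → ℝ≥0∞ := fun x => if x ∈ B then 1 else 0 with hχ
  have hAslice : ∀ x : E → Bool, MeasurableSet {η | (x, η) ∈ A} :=
    fun x => hAmeas.preimage measurable_prodMk_left
  have haA1 : ∀ x, aA x ≤ 1 := fun x => prob_le_one
  have hsub : ∀ (a : E) (x : E → Bool), aA x ≤ aA (Function.update x a (! x a)) + dA a x := by
    intro a x
    calc aA x ≤ ρ ({η | (Function.update x a (! x a), η) ∈ A}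
        ∪ ({η | (x, η) ∈ A} \ {η | (Function.update x a (! x a), η) ∈ A})) := by
          refine measure_mono fun η hη => ?_
          by_cases h : η ∈ {η | (Function.update x a (! x a), η) ∈ A}
          · exact Or.inl h
          · exact Or.inr ⟨hη, h⟩
    _ ≤ aA (Function.update x a (! x a)) + dA a x := measure_union_le _ _
  -- measure computations
  have hnuA : ∀ (k : ℕ) (e : Fin n → E) (x0 : E → Bool),
      ν (A ∩ (ExplEvent expl k e x0) ×ˢ (Set.univ : Set M))
        = ∑ x ∈ EPD.EkF expl k e x0, EPD.wt p x * aA x := by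
    intro k e x0
    have h1 : A ∩ (ExplEvent expl k e x0) ×ˢ (Set.univ : Set M)
        = (↑(EPD.EkF expl k e x0) ×ˢ (Set.univ : Set M)) ∩ A := by
      rw [EPD.EkF_coe, Set.inter_comm]
    rw [h1, EPD.nu_slice ρ hp _ A hAslice]
  have hnuAll : ν A = ∑ x : E → Bool, EPD.wt p x * aA x := by
    have h1 : A = (↑(Finset.univ : Finset (E → Bool)) ×ˢ (Set.univ : Set M)) ∩ A := by
      rw [Finset.coe_univ, Set.univ_prod_univ, Set.univ_inter]
    rw [h1, EPD.nu_slice ρ hp _ A hAslice]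
  have hnuPiv : ∀ (k : ℕ) (e : Fin n → E) (x0 : E → Bool) (a : E),
      ν ((A ∩ (ExplEvent expl k e x0) ×ˢ (Set.univ : Set M)) ∩ {z | Pivotal A a z})
        = ∑ x ∈ EPD.EkF expl k e x0, EPD.wt p x * dA a x := by
    intro k e x0 a
    have hslice : ∀ x : E → Bool, {η | (x, η) ∈ A ∩ {z | Pivotal A a z}}
        = {η | (x, η) ∈ A} \ {η | (Function.update x a (! x a), η) ∈ A} := by
      intro x
      ext η
      simp only [Set.mem_inter_iff, Set.mem_setOf_eq, Set.mem_diff, Pivotal]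
      constructor
      · rintro ⟨hA, hpiv⟩
        exact ⟨hA, fun hcon => hpiv ⟨fun _ => hA, fun _ => hcon⟩⟩
      · rintro ⟨hA, hnot⟩
        exact ⟨hA, fun hiff => hnot (hiff.2 hA)⟩
    have h1 : (A ∩ (ExplEvent expl k e x0) ×ˢ (Set.univ : Set M)) ∩ {z | Pivotal A a z}
        = (↑(EPD.EkF expl k e x0) ×ˢ (Set.univ : Set M)) ∩ (A ∩ {z | Pivotal A a z}) := by
      rw [EPD.EkF_coe]
      ext z
      simp only [Set.mem_inter_iff, Set.mem_prod, Set.mem_univ, and_true, Set.mem_setOf_eq]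
      tauto
    rw [h1, EPD.nu_slice ρ hp _ _ (fun x => by
      rw [hslice x]; exact (hAslice x).diff (hAslice _))]
    refine Finset.sum_congr rfl fun x _ => ?_
    rw [hslice x, hdA]
  have hsum_le1 : ∀ s : Finset (E → Bool), (∑ x ∈ s, EPD.wt p x * aA x) ≤ 1 := by
    intro s
    calc ∑ x ∈ s, EPD.wt p x * aA x ≤ ∑ x ∈ s, EPD.wt p x :=
          Finset.sum_le_sum fun x _ => mul_le_of_le_one_right' (haA1 x)
    _ ≤ ∑ x : E → Bool, EPD.wt p x := Finset.sum_le_sum_of_subset (Finset.subset_univ s)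
    _ = 1 := EPD.sum_wt_univ hp
  -- the H hypothesis in sum form
  have hHsum : ∀ (k : ℕ) (hk : k < n) (e : Fin n → E) (x0 : E → Bool)
      (ω : E → Bool), ω ∈ ExplEvent expl k e x0 → EPD.wt p ω * aA ω ≠ 0 →
      ∑ x ∈ EPD.EkF expl k e x0, EPD.wt p x * dA (expl.order ω ⟨k, hk⟩) x
        ≤ ε * ∑ x ∈ EPD.EkF expl k e x0, EPD.wt p x * aA x := by
    intro k hk e x0 ω hωmem hωne
    have hfull : ν (A ∩ (ExplEvent expl n (expl.order ω) ω) ×ˢ (Set.univ : Set M)) ≠ 0 := by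
      rw [hnuA]
      have hge : EPD.wt p ω * aA ω ≤ ∑ x ∈ EPD.EkF expl n (expl.order ω) ω, EPD.wt p x * aA x :=
        Finset.single_le_sum (f := fun x => EPD.wt p x * aA x) (fun i _ => zero_le)
          (EPD.mem_EkF.2 (EPD.self_mem expl ω n))
      intro hcon
      exact hωne (le_antisymm (le_trans hge hcon.le) (zero_le))
    have hHk := H ⟨k, hk⟩ (expl.order ω) ω hfull
    have hist : ExplEvent expl k e x0 = ExplEvent expl k (expl.order ω) ω :=
      EPD.hist_congr expl fun j hj => ⟨(hωmem j hj).1.symm, (hωmem j hj).2.symm⟩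
    have hkval : ((⟨k, hk⟩ : Fin n) : ℕ) = k := rfl
    rw [hkval, ← hist] at hHk
    set C := A ∩ (ExplEvent expl k e x0) ×ˢ (Set.univ : Set M) with hC
    have hCmeas : MeasurableSet C :=
      hAmeas.inter ((EPD.measurableSet_all _).prod MeasurableSet.univ)
    rw [cond_apply hCmeas] at hHk
    have hT0 : ν C ≠ 0 := by
      rw [hC, hnuA]
      have hge : EPD.wt p ω * aA ω ≤ ∑ x ∈ EPD.EkF expl k e x0, EPD.wt p x * aA x :=
        Finset.single_le_sum (f := fun x => EPD.wt p x * aA x) (fun i _ => zero_le)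
          (EPD.mem_EkF.2 hωmem)
      intro hcon
      exact hωne (le_antisymm (le_trans hge hcon.le) (zero_le))
    have hTtop : ν C ≠ ∞ := by
      rw [hC, hnuA]
      exact ne_top_of_le_ne_top ENNReal.one_ne_top (hsum_le1 _)
    have hX : ν (C ∩ {z | Pivotal A (expl.order ω ⟨k, hk⟩) z}) ≤ ε * ν C := by
      calc ν (C ∩ {z | Pivotal A (expl.order ω ⟨k, hk⟩) z})
          = ν C * ((ν C)⁻¹ * ν (C ∩ {z | Pivotal A (expl.order ω ⟨k, hk⟩) z})) := by
            rw [← mul_assoc, ENNReal.mul_inv_cancel hT0 hTtop, one_mul]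
      _ ≤ ν C * ε := mul_le_mul_right hHk _
      _ = ε * ν C := mul_comm _ _
    rw [hC] at hX
    rw [hnuPiv, hnuA] at hX
    exact hX
  -- χ properties
  have hχ1 : ∀ x, χ x ≤ 1 := by
    intro x; rw [hχ]; dsimp only; split
    · exact le_refl 1
    · exact zero_le
  have hχm : ∀ x y : E → Bool, (∀ i, x i ≤ y i) → χ x ≤ χ y := by
    intro x y hxy
    rw [hχ]; dsimp only
    by_cases hx : x ∈ B
    · rw [if_pos hx, if_pos (hB x y hxy hx)]
    · rw [if_neg hx]; exact zero_le
  -- apply main induction at k = 0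
  set e0 : Fin n → E := fun j => expl.order (fun _ => true) j with he0
  set x00 : E → Bool := fun _ => true with hx00
  have hEk0 : EPD.EkF expl 0 e0 x00 = Finset.univ := by
    ext y
    simp only [EPD.mem_EkF, Finset.mem_univ, iff_true]
    intro j hj
    omega
  have hmerge0 : ∀ y, EPD.mergeF 0 e0 x00 y = y := by
    intro y
    funext i
    rw [EPD.mergeF]
    have : i ∉ EPD.RF 0 e0 := by
      rw [EPD.mem_RF]
      rintro ⟨j, hj, -⟩
      omega
    rw [if_neg this]
  have hmain := EPD.main_ind expl hp hε hq hq1 aA dA haA1 hsub hHsum χ hχ1 hχm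
    n 0 (Nat.zero_le _) (by omega) e0 x00 (by rw [hEk0, ← hnuAll]; exact hApos)
  rw [hEk0] at hmain
  have hGeq : (∑ y : E → Bool, EPD.wt q y * χ (EPD.mergeF 0 e0 x00 y)) = prodBern E q B := by
    have h1 : ∀ y : E → Bool, EPD.wt q y * χ (EPD.mergeF 0 e0 x00 y) = EPD.wt q y * χ y :=
      fun y => by rw [hmerge0 y]
    rw [Finset.sum_congr rfl fun y _ => h1 y]
    have h2 : (B : Set (E → Bool)) = ↑(Finset.univ.filter (fun y : E → Bool => y ∈ B)) := by
      ext y; simp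
    rw [h2, EPD.prodBern_finset hq1, Finset.sum_filter]
    refine Finset.sum_congr rfl fun y _ => ?_
    rw [hχ]; dsimp only
    split
    · rw [mul_one]
    · rw [mul_zero]
  have hFeq : (∑ x : E → Bool, EPD.wt p x * aA x * χ x)
      = ν (A ∩ (B ×ˢ (Set.univ : Set M))) := by
    have h1 : A ∩ (B ×ˢ (Set.univ : Set M))
        = (↑(Finset.univ.filter (fun y : E → Bool => y ∈ B)) ×ˢ (Set.univ : Set M)) ∩ A := by
      rw [Set.inter_comm]
      congr 1
      congr 1
      ext y; simp
    rw [h1, EPD.nu_slice ρ hp _ A hAslice, Finset.sum_filter]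
    refine (Finset.sum_congr rfl fun y _ => ?_).symm
    rw [hχ]; dsimp only
    split
    · rw [mul_one]
    · rw [mul_zero]
  rw [hGeq, hFeq, ← hnuAll] at hmain
  -- conclude
  rw [Measure.map_apply measurable_fst (EPD.measurableSet_all B), cond_apply hAmeas]
  have hpre : Prod.fst ⁻¹' B = B ×ˢ (Set.univ : Set M) := by
    ext z
    simp [Set.mem_prod]
  rw [hpre]
  have hAfin : ν A ≠ ∞ := measure_ne_top ν A
  calc prodBern E q B = (ν A)⁻¹ * ν A * prodBern E q B := by
        rw [ENNReal.inv_mul_cancel hApos hAfin, one_mul]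
  _ = (ν A)⁻¹ * (prodBern E q B * ν A) := by ring
  _ ≤ (ν A)⁻¹ * ν (A ∩ (B ×ˢ (Set.univ : Set M))) := mul_le_mul_right hmain _
end

section
/- Let E be a finite set, p ∈ [0,1], and let ν be the product measure on {0,1}^E × M which is Bernoulli(p) on each coordinate of E and ρ on M. Fix an exploration of E, a step k, and an exploration history (e,x) of positive probability. Then the conditional law ν[· | Expl_k(e,x)] equals the product measure that deterministically assigns value x_{e_j} to coordinate e_j for each j ≤ k, is Bernoulli(p) on the remaining coordinates of E, and is ρ on M. -/
open MeasureTheory ProbabilityTheory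
open scoped ENNReal Classical

/-- The law of the coordinate `a` after conditioning on the exploration history `(e, x)` up to
step `k`: a Dirac mass at the revealed value for explored coordinates, Bernoulli `p`
otherwise. -/
noncomputable def stepMeasure {E : Type*} [Fintype E] (p : ℝ≥0∞) (k : ℕ)
    (e : Fin (Fintype.card E) → E) (x : E → Bool) (a : E) : Measure Bool :=
  if ∃ j : Fin (Fintype.card E), (j : ℕ) < k ∧ e j = a then Measure.dirac (x a) else bernB p

instance {E : Type*} [Fintype E] (p : ℝ≥0∞) (k : ℕ) (e : Fin (Fintype.card E) → E)
    (x : E → Bool) (a : E) : IsProbabilityMeasure (stepMeasure p k e x a) := by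
  unfold stepMeasure bernB; split <;> infer_instance

lemma explEvent_eq_pi {E : Type*} [Fintype E] (expl : Exploration E) (k : ℕ)
    (e : Fin (Fintype.card E) → E) (x : E → Bool)
    (hne : (ExplEvent expl k e x).Nonempty) :
    ExplEvent expl k e x = Set.univ.pi (fun a =>
      if ∃ j : Fin (Fintype.card E), (j : ℕ) < k ∧ e j = a then {x a} else Set.univ) := by
  obtain ⟨ω₀, hω₀⟩ := hne
  ext ω
  simp only [Set.mem_univ_pi]
  constructor
  · intro hω a
    split_ifs with hS
    · obtain ⟨j, hjk, hje⟩ := hS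
      subst hje
      exact (hω j hjk).2
    · trivial
  · intro hω
    have hval : ∀ j : Fin (Fintype.card E), (j : ℕ) < k → ω (e j) = x (e j) := by
      intro j hjk
      have := hω (e j)
      rw [if_pos ⟨j, hjk, rfl⟩] at this
      exact this
    have horder : ∀ n : ℕ, ∀ j : Fin (Fintype.card E), (j : ℕ) = n → (j : ℕ) < k →
        expl.order ω j = e j := by
      intro n
      induction n using Nat.strong_induction_on with
      | _ n ih =>
        intro j hjn hjk
        have h1 : expl.order ω j = expl.order ω₀ j := by
          apply expl.adapted
          intro i hij
          have hik : (i : ℕ) < k := lt_trans hij hjk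
          have hi1 : expl.order ω i = e i := ih (i : ℕ) (hjn ▸ hij) i rfl hik
          have hi2 : expl.order ω₀ i = e i := (hω₀ i hik).1
          refine ⟨hi1.trans hi2.symm, ?_⟩
          rw [hi1, hval i hik, ← (hω₀ i hik).2]
        rw [h1, (hω₀ j hjk).1]
    intro j hjk
    exact ⟨horder (j : ℕ) j rfl hjk, hval j hjk⟩


instance bernB_prob (p : ℝ≥0∞) : IsProbabilityMeasure (bernB p) := by
  unfold bernB; infer_instance

instance prodBern_prob (E : Type*) [Fintype E] (p : ℝ≥0∞) :
    IsProbabilityMeasure (prodBern E p) := by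
  unfold prodBern; infer_instance

lemma restrict_explEvent {E : Type*} [Fintype E] (p : ℝ≥0∞) (expl : Exploration E) (k : ℕ)
    (e : Fin (Fintype.card E) → E) (x : E → Bool)
    (hne : (ExplEvent expl k e x).Nonempty) :
    (prodBern E p).restrict (ExplEvent expl k e x)
      = prodBern E p (ExplEvent expl k e x) • Measure.pi (stepMeasure p k e x) := by
  set A := ExplEvent expl k e x with hAdef
  set f : E → Set Bool := fun a =>
    if ∃ j : Fin (Fintype.card E), (j : ℕ) < k ∧ e j = a then {x a} else Set.univ with hf
  have hA : A = Set.univ.pi f := explEvent_eq_pi expl k e x hne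
  have hμA : prodBern E p A = ∏ a, bernB p (f a) := by
    rw [hA]; exact Measure.pi_pi _ _
  have hpiB : (prodBern E p) {ω₀_ : E → Bool | False} = 0 := by simp
  apply Measure.ext_of_singleton
  intro ω₀
  have hs1 : (prodBern E p) {ω₀} = ∏ a, bernB p {ω₀ a} := by
    rw [← Set.univ_pi_singleton ω₀]; exact Measure.pi_pi _ _
  have hs2 : (Measure.pi (stepMeasure p k e x)) {ω₀} = ∏ a, stepMeasure p k e x a {ω₀ a} := by
    rw [← Set.univ_pi_singleton ω₀]; exact Measure.pi_pi _ _
  rw [Measure.restrict_apply (measurableSet_singleton ω₀), Measure.smul_apply, smul_eq_mul,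
    hs2, hμA]
  by_cases hmem : ω₀ ∈ A
  · have hcap : {ω₀} ∩ A = {ω₀} := Set.inter_eq_self_of_subset_left (by simpa using hmem)
    rw [hcap, hs1, ← Finset.prod_mul_distrib]
    refine Finset.prod_congr rfl fun a _ => ?_
    unfold stepMeasure
    split_ifs with hS
    · have hxa : ω₀ a = x a := by
        rw [hA, Set.mem_univ_pi] at hmem
        have := hmem a
        simp only [hf, hS, if_true, Set.mem_singleton_iff] at this
        exact this
      rw [hf]
      simp only [if_pos hS]
      rw [hxa, Measure.dirac_apply_of_mem (Set.mem_singleton _), mul_one]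
    · rw [hf]
      simp only [if_neg hS]
      rw [measure_univ, one_mul]
  · have hcap : {ω₀} ∩ A = ∅ := by
      rw [Set.singleton_inter_eq_empty]; exact hmem
    rw [hcap, measure_empty]
    have : ∃ a, (∃ j : Fin (Fintype.card E), (j : ℕ) < k ∧ e j = a) ∧ ω₀ a ≠ x a := by
      rw [hA, Set.mem_univ_pi] at hmem
      push_neg at hmem
      obtain ⟨a, ha⟩ := hmem
      refine ⟨a, ?_, ?_⟩
      · by_contra hS
        rw [hf] at ha; simp only [if_neg hS] at ha; exact ha trivial
      · intro hx
        rw [hf] at ha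
        rcases Classical.em (∃ j : Fin (Fintype.card E), (j : ℕ) < k ∧ e j = a) with hS | hS
        · simp only [if_pos hS, Set.mem_singleton_iff] at ha; exact ha hx
        · simp only [if_neg hS] at ha; exact ha trivial
    obtain ⟨a, hS, hne'⟩ := this
    have hz : stepMeasure p k e x a {ω₀ a} = 0 := by
      unfold stepMeasure
      rw [if_pos hS]
      simp [Measure.dirac_apply, Ne.symm hne']
    rw [show (∏ i, stepMeasure p k e x i {ω₀ i}) = 0 from
      Finset.prod_eq_zero (Finset.mem_univ a) hz, mul_zero]

/-- Conditionally on the exploration history `Expl_k(e,x)`, the law of the configuration is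
the product measure assigning deterministically the value `x (e j)` to the coordinate `e j`
for `j ≤ k`, being Bernoulli `p` on the remaining coordinates of `E`, and `ρ` on `M`. -/
theorem cond_explEvent_eq_prod {E : Type*} [Fintype E]
    {M : Type*} [MeasurableSpace M]
    (p : ℝ≥0∞) (hp : p ≤ 1) (ρ : Measure M) [IsProbabilityMeasure ρ]
    (ν : Measure ((E → Bool) × M)) (hν : ν = (prodBern E p).prod ρ)
    (expl : Exploration E)
    (k : ℕ) (e : Fin (Fintype.card E) → E) (x : E → Bool)
    (hpos : ν ((ExplEvent expl k e x) ×ˢ Set.univ) ≠ 0) :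
    ν[|(ExplEvent expl k e x) ×ˢ Set.univ] = (Measure.pi (stepMeasure p k e x)).prod ρ := by
  subst hν
  set A := ExplEvent expl k e x with hAdef
  have hμpos : prodBern E p A ≠ 0 := by
    rwa [Measure.prod_prod, measure_univ, mul_one] at hpos
  have hμtop : prodBern E p A ≠ ⊤ := measure_ne_top _ _
  have hne : A.Nonempty := nonempty_of_measure_ne_zero hμpos
  have hAm : MeasurableSet A := (Set.toFinite A).measurableSet
  have hkey := restrict_explEvent p expl k e x hne
  refine (Measure.prod_eq fun s t hs ht => ?_).symm
  rw [cond_apply (hAm.prod MeasurableSet.univ), Measure.prod_prod, measure_univ, mul_one,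
    Set.prod_inter_prod, Measure.prod_prod, Set.univ_inter]
  have hres : prodBern E p (A ∩ s) = prodBern E p A * Measure.pi (stepMeasure p k e x) s := by
    have h1 : (prodBern E p).restrict A s
        = (prodBern E p A • Measure.pi (stepMeasure p k e x)) s := by rw [hkey]
    rwa [Measure.restrict_apply hs, Measure.smul_apply, smul_eq_mul, Set.inter_comm] at h1
  rw [hres, ← mul_assoc, ← mul_assoc, ENNReal.inv_mul_cancel hμpos hμtop, one_mul]
end

section
/- Assume the near-critical inequality: for all p ∈ [0,1] and h > 0, with q = p(1 − m_h(p)), one has ψ_n(q) ≤ ψ_n(p) e^{−hn}/(1 − m_h(p)) for all n ≥ 0. Then for every p < p_c there exist constants C > 0 and c > 0 such that ψ_n(p) ≤ C e^{−cn} for all n ≥ 0, i.e. the cluster volume has an exponential tail throughout the subcritical phase. -/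
open MeasureTheory ProbabilityTheory Filter
open scoped ENNReal

/-- The subgraph of open edges of `H` in the configuration `ω`. -/
def openSub {V : Type*} (H : SimpleGraph V) (ω : Sym2 V → Bool) : SimpleGraph V where
  Adj a b := H.Adj a b ∧ ω s(a, b) = true
  symm := by
    constructor
    intro a b h
    refine ⟨h.1.symm, ?_⟩
    rw [Sym2.eq_swap]; exact h.2
  loopless := ⟨fun a h => H.irrefl h.1⟩

/-- The open cluster `C_o` of the vertex `o` in the configuration `ω`. -/
def cluster {V : Type*} (H : SimpleGraph V) (o : V) (ω : Sym2 V → Bool) : Set V :=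
  {v | (openSub H ω).Reachable o v}

/-- The open cluster of `o` contains at least `n` vertices (`|C_o| ≥ n`). -/
def clusterAtLeast {V : Type*} (H : SimpleGraph V) (o : V) (n : ℕ) (ω : Sym2 V → Bool) : Prop :=
  ∃ s : Finset V, ↑s ⊆ cluster H o ω ∧ n ≤ s.card

/-- `μ` is the Bernoulli product measure of parameter `p` on `{0,1}^ι`, characterized by
being a probability measure giving the correct product probabilities to all cylinders. -/
def IsBernoulliProduct {ι : Type*} (p : ℝ) (μ : Measure (ι → Bool)) : Prop :=
  IsProbabilityMeasure μ ∧
    ∀ (s : Finset ι) (x : ι → Bool),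
      μ {ω | ∀ i ∈ s, ω i = x i} =
        ∏ i ∈ s, (if x i then ENNReal.ofReal p else ENNReal.ofReal (1 - p))

/-- The magnetization: the probability that the cluster of `o` contains a green vertex. -/
noncomputable def mag {V : Type*} (H : SimpleGraph V) (o : V)
    (μe : Measure (Sym2 V → Bool)) (γv : Measure (V → Bool)) : ℝ :=
  ((μe.prod γv) {z | ∃ v ∈ cluster H o z.1, z.2 v = true}).toReal

/-- `ψ_n`: the probability that the cluster of `o` has at least `n` vertices. -/
noncomputable def psiVol {V : Type*} (H : SimpleGraph V) (o : V) (n : ℕ)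
    (μe : Measure (Sym2 V → Bool)) : ℝ :=
  (μe {ω | clusterAtLeast H o n ω}).toReal

/-- `θ(p)`: the probability that the cluster of `o` is infinite. -/
noncomputable def theta {V : Type*} (H : SimpleGraph V) (o : V)
    (μe : Measure (Sym2 V → Bool)) : ℝ :=
  (μe {ω | (cluster H o ω).Infinite}).toReal

/-- The critical parameter `p_c = inf {p ∈ [0,1] : μ_p[|C_o| = ∞] > 0}`. -/
noncomputable def pCrit {V : Type*} (H : SimpleGraph V) (o : V)
    (μ : ℝ → Measure (Sym2 V → Bool)) : ℝ :=
  sInf {p | p ∈ Set.Icc (0:ℝ) 1 ∧ 0 < theta H o (μ p)}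

namespace ExpDecayAux
open MeasureTheory ProbabilityTheory Filter
open scoped ENNReal

section Cylinders

variable {ι : Type*}

/-- Cylinder sets in `{0,1}^ι`. -/
def cyl (s : Finset ι) (x : ι → Bool) : Set (ι → Bool) := {ω | ∀ i ∈ s, ω i = x i}

lemma measurableSet_cyl (s : Finset ι) (x : ι → Bool) : MeasurableSet (cyl s x) := by
  have h : cyl s x = ⋂ i ∈ s, (fun ω : ι → Bool => ω i) ⁻¹' {x i} := by
    ext ω; simp [cyl]
  rw [h]
  exact MeasurableSet.biInter s.countable_toSet fun i _ =>
    (measurable_pi_apply i) (measurableSet_singleton (x i))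

lemma isPiSystem_cyl : IsPiSystem {S : Set (ι → Bool) | ∃ s x, S = cyl s x} := by
  classical
  rintro S ⟨s, x, rfl⟩ T ⟨t, y, rfl⟩ hne
  obtain ⟨ω₀, h1, h2⟩ := hne
  refine ⟨s ∪ t, fun i => if i ∈ s then x i else y i, ?_⟩
  ext ω
  simp only [cyl, Set.mem_inter_iff, Set.mem_setOf_eq, Finset.mem_union]
  constructor
  · rintro ⟨hs, ht⟩ i hi
    by_cases h : i ∈ s
    · simp [h, hs i h]
    · simp [h, ht i (hi.resolve_left h)]
  · intro h
    constructor
    · intro i hi; have := h i (Or.inl hi); simpa [hi] using this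
    · intro i hi
      have hh := h i (Or.inr hi)
      by_cases his : i ∈ s
      · rw [hh]; simp only [his, if_true]
        rw [← h1 i his, h2 i hi]
      · simpa [his] using hh

lemma generateFrom_cyl :
    (MeasurableSpace.pi : MeasurableSpace (ι → Bool)) =
      MeasurableSpace.generateFrom {S : Set (ι → Bool) | ∃ s x, S = cyl s x} := by
  apply le_antisymm
  · rw [MeasurableSpace.pi]
    refine iSup_le fun i => ?_
    intro S hS
    obtain ⟨T, -, rfl⟩ := hS
    have h : (fun ω : ι → Bool => ω i) ⁻¹' T = ⋃ b ∈ T, cyl {i} (fun _ => b) := by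
      ext ω; simp [cyl]
    rw [h]
    exact MeasurableSet.biUnion T.to_countable fun b _ =>
      MeasurableSpace.measurableSet_generateFrom ⟨{i}, fun _ => b, rfl⟩
  · rw [MeasurableSpace.generateFrom_le_iff]
    rintro S ⟨s, x, rfl⟩
    exact measurableSet_cyl s x

lemma cyl_measure {p : ℝ} {μ : Measure (ι → Bool)} (h : IsBernoulliProduct p μ)
    (s : Finset ι) (x : ι → Bool) :
    μ (cyl s x) = ∏ i ∈ s, (if x i then ENNReal.ofReal p else ENNReal.ofReal (1 - p)) :=
  h.2 s x

/-- The coordinatewise AND map used for the monotone coupling. -/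
def andMap (z : (ι → Bool) × (ι → Bool)) : ι → Bool := fun i => z.1 i && z.2 i

lemma measurable_andMap : Measurable (andMap (ι := ι)) := by
  apply measurable_pi_lambda
  intro i
  rw [show (fun z : (ι → Bool) × (ι → Bool) => andMap z i) =
      (fun p : Bool × Bool => p.1 && p.2) ∘ fun z => (z.1 i, z.2 i) from rfl]
  exact (measurable_of_countable _).comp
    (Measurable.prodMk (measurable_fst.eval) (measurable_snd.eval))

lemma andMap_preimage_cyl [DecidableEq ι] (s : Finset ι) (x : ι → Bool) :
    andMap ⁻¹' cyl s x =
      ⋃ g ∈ Finset.univ.filter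
          (fun g : (i : ↥s) → Bool × Bool => ∀ i : ↥s, ((g i).1 && (g i).2) = x i),
        (cyl s (fun i => if h : i ∈ s then (g ⟨i, h⟩).1 else false)) ×ˢ
          (cyl s (fun i => if h : i ∈ s then (g ⟨i, h⟩).2 else false)) := by
  ext z
  simp only [Set.mem_preimage, cyl, Set.mem_setOf_eq, Set.mem_iUnion, Finset.mem_filter,
    Finset.mem_univ, true_and, Set.mem_prod, andMap]
  constructor
  · intro hz
    refine ⟨fun i => (z.1 i, z.2 i), fun i => hz i i.2, ?_, ?_⟩ <;>
      · intro i hi; simp [hi]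
  · rintro ⟨g, hg, h1, h2⟩ i hi
    have e1 := h1 i hi
    have e2 := h2 i hi
    simp only [hi, dif_pos] at e1 e2
    rw [e1, e2]
    exact hg ⟨i, hi⟩

/-- The AND of independent Bernoulli(b) and Bernoulli(r) configurations is Bernoulli(b*r). -/
lemma bernoulli_and_map {a b r : ℝ} (hb0 : 0 ≤ b) (hb1 : b ≤ 1) (hr0 : 0 ≤ r) (hr1 : r ≤ 1)
    (hab : a = b * r) {μa μb μr : Measure (ι → Bool)}
    (hA : IsBernoulliProduct a μa) (hB : IsBernoulliProduct b μb)
    (hR : IsBernoulliProduct r μr) :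
    Measure.map andMap (μb.prod μr) = μa := by
  classical
  haveI := hA.1; haveI := hB.1; haveI := hR.1
  haveI : IsProbabilityMeasure (Measure.map (andMap (ι := ι)) (μb.prod μr)) :=
    Measure.isProbabilityMeasure_map measurable_andMap.aemeasurable
  refine ext_of_generate_finite _ generateFrom_cyl isPiSystem_cyl ?_ ?_
  · rintro S ⟨s, x, rfl⟩
    rw [Measure.map_apply measurable_andMap (measurableSet_cyl s x), andMap_preimage_cyl]
    rw [measure_biUnion_finset]
    rotate_left
    · intro g hg g' hg' hne
      simp only [Function.onFun]
      rw [Set.disjoint_left]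
      rintro z ⟨hz1, hz2⟩ ⟨hw1, hw2⟩
      apply hne
      funext i
      have a1 := hz1 i i.2; have a2 := hz2 i i.2
      have b1 := hw1 i i.2; have b2 := hw2 i i.2
      simp only [i.2, dif_pos] at a1 a2 b1 b2
      have h1 : (g i).1 = (g' i).1 := by rw [← a1, ← b1]
      have h2 : (g i).2 = (g' i).2 := by rw [← a2, ← b2]
      exact Prod.ext h1 h2
    · exact fun g _ => (measurableSet_cyl _ _).prod (measurableSet_cyl _ _)
    have hterm : ∀ g ∈ Finset.univ.filter
        (fun g : (i : ↥s) → Bool × Bool => ∀ i : ↥s, ((g i).1 && (g i).2) = x i),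
        (μb.prod μr) ((cyl s (fun i => if h : i ∈ s then (g ⟨i, h⟩).1 else false)) ×ˢ
          (cyl s (fun i => if h : i ∈ s then (g ⟨i, h⟩).2 else false))) =
          ∏ i : ↥s, ((if (g i).1 then ENNReal.ofReal b else ENNReal.ofReal (1 - b)) *
            (if (g i).2 then ENNReal.ofReal r else ENNReal.ofReal (1 - r))) := by
      intro g _
      rw [Measure.prod_prod, cyl_measure hB, cyl_measure hR, ← Finset.prod_mul_distrib,
        ← Finset.prod_attach s fun i =>
          ((if (if h : (i:ι) ∈ s then (g ⟨i, h⟩).1 else false) then ENNReal.ofReal b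
              else ENNReal.ofReal (1 - b)) *
            (if (if h : (i:ι) ∈ s then (g ⟨i, h⟩).2 else false) then ENNReal.ofReal r
              else ENNReal.ofReal (1 - r)))]
      apply Finset.prod_congr rfl
      intro i _
      simp [i.2]
    rw [Finset.sum_congr rfl hterm]
    have hGset : Finset.univ.filter
        (fun g : (i : ↥s) → Bool × Bool => ∀ i : ↥s, ((g i).1 && (g i).2) = x i) =
        Fintype.piFinset (fun i : ↥s =>
          Finset.univ.filter (fun c : Bool × Bool => (c.1 && c.2) = x i)) := by
      ext g
      simp [Fintype.mem_piFinset]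
    rw [hGset]
    refine Eq.trans (Finset.prod_univ_sum
      (fun i : ↥s => Finset.univ.filter (fun c : Bool × Bool => (c.1 && c.2) = x i))
      (fun _ (c : Bool × Bool) =>
        ((if c.1 then ENNReal.ofReal b else ENNReal.ofReal (1 - b)) *
          (if c.2 then ENNReal.ofReal r else ENNReal.ofReal (1 - r))))).symm ?_
    rw [cyl_measure hA, ← Finset.prod_attach s fun i =>
      (if x i then ENNReal.ofReal a else ENNReal.ofReal (1 - a))]
    apply Finset.prod_congr rfl
    intro i _
    rw [Finset.sum_filter, Fintype.sum_prod_type]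
    simp only [Fintype.sum_bool]
    by_cases hx : x i = true
    · simp only [hx]
      norm_num
      rw [← ENNReal.ofReal_mul hb0, ← hab]
    · simp only [Bool.not_eq_true] at hx
      simp only [hx]
      norm_num
      rw [← ENNReal.ofReal_mul hb0, ← ENNReal.ofReal_mul (by linarith), ← ENNReal.ofReal_mul
        (by linarith), ← ENNReal.ofReal_add (by nlinarith) (by nlinarith),
        ← ENNReal.ofReal_add (by nlinarith) (by nlinarith)]
      congr 1
      nlinarith [hab]
  · simp [measure_univ]

end Cylinders

section Graph

variable {V : Type*} (H : SimpleGraph V) (o : V)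

lemma countable_of_connected_locallyFinite (o : V) (hconn : H.Connected)
    (hlocfin : ∀ v : V, (H.neighborSet v).Finite) : Countable V := by
  have step : ∀ (n : ℕ) {x y : V} (q : H.Walk x y), q.length = n + 1 →
      ∃ u, H.Adj x u ∧ ∃ q' : H.Walk u y, q'.length = n := by
    intro n x y q hq
    cases q with
    | nil => simp at hq
    | cons h q' => exact ⟨_, h, q', by simpa using hq⟩
  have hfin : ∀ n : ℕ, {v : V | ∃ p : H.Walk o v, p.length = n}.Finite := by
    intro n
    induction n with
    | zero =>
      refine Set.Finite.subset (Set.finite_singleton o) ?_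
      rintro v ⟨p, hp⟩
      have := p.eq_of_length_eq_zero hp
      simp [this]
    | succ n ih =>
      refine Set.Finite.subset (Set.Finite.biUnion ih fun u _ => hlocfin u) ?_
      rintro v ⟨p, hp⟩
      obtain ⟨u, hadj, q', hq'⟩ := step n p.reverse (by
        rw [SimpleGraph.Walk.length_reverse]; exact hp)
      exact Set.mem_biUnion ⟨q'.reverse, by simpa using hq'⟩ hadj.symm
  have huniv : (Set.univ : Set V).Countable := by
    refine Set.Countable.mono ?_ (Set.countable_iUnion fun n => (hfin n).countable)
    intro v _
    obtain ⟨w⟩ := hconn.preconnected o v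
    exact Set.mem_iUnion.mpr ⟨w.length, w, rfl⟩
  exact Set.countable_univ_iff.mp huniv

lemma openSub_le (ω : Sym2 V → Bool) : openSub H ω ≤ H := fun a b h => (show H.Adj a b ∧ ω s(a, b) = true from h).1

lemma mem_cluster_iff (ω : Sym2 V → Bool) (v : V) :
    v ∈ cluster H o ω ↔ ∃ w : H.Walk o v, ∀ e ∈ w.edges, ω e = true := by
  constructor
  · rintro ⟨p⟩
    refine ⟨p.transfer H (fun e he =>
      SimpleGraph.edgeSet_mono (openSub_le H ω) (p.edges_subset_edgeSet he)), ?_⟩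
    intro e he
    rw [SimpleGraph.Walk.edges_transfer] at he
    have := SimpleGraph.Walk.edges_subset_edgeSet p he
    induction e with
    | _ a b => exact (show H.Adj a b ∧ ω s(a, b) = true from this).2
  · rintro ⟨w, hw⟩
    refine ⟨w.transfer (openSub H ω) ?_⟩
    intro e he
    have h1 := SimpleGraph.Walk.edges_subset_edgeSet w he
    induction e with
    | _ a b => exact (show H.Adj a b ∧ ω s(a, b) = true from ⟨h1, hw _ he⟩)

lemma countable_walk [Countable V] (hlocfin : ∀ v : V, (H.neighborSet v).Finite) (u v : V) :
    Countable (H.Walk u v) := by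
  classical
  haveI : ∀ w : V, Fintype (H.neighborSet w) := fun w => (hlocfin w).fintype
  have : (Set.univ : Set (H.Walk u v)).Countable := by
    refine Set.Countable.mono ?_
      (Set.countable_iUnion fun n => ({p : H.Walk u v | p.length = n}.toFinite).countable)
    intro p _
    exact Set.mem_iUnion.mpr ⟨p.length, rfl⟩
  exact Set.countable_univ_iff.mp this

lemma measurableSet_mem_cluster [Countable V]
    (hlocfin : ∀ v : V, (H.neighborSet v).Finite) (v : V) :
    MeasurableSet {ω : Sym2 V → Bool | v ∈ cluster H o ω} := by
  haveI := countable_walk H hlocfin o v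
  have h : {ω : Sym2 V → Bool | v ∈ cluster H o ω} =
      ⋃ w : H.Walk o v, ⋂ e ∈ w.edges, (fun ω : Sym2 V → Bool => ω e) ⁻¹' {true} := by
    ext ω
    simp only [Set.mem_setOf_eq, mem_cluster_iff, Set.mem_iUnion, Set.mem_iInter,
      Set.mem_preimage, Set.mem_singleton_iff]
  rw [h]
  refine MeasurableSet.iUnion fun w => MeasurableSet.biInter
    (w.edges.finite_toSet).countable fun e _ => ?_
  exact (measurable_pi_apply e) (measurableSet_singleton true)

lemma measurableSet_clusterAtLeast [Countable V]
    (hlocfin : ∀ v : V, (H.neighborSet v).Finite) (n : ℕ) :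
    MeasurableSet {ω : Sym2 V → Bool | clusterAtLeast H o n ω} := by
  have h : {ω : Sym2 V → Bool | clusterAtLeast H o n ω} =
      ⋃ s : Finset V, ⋃ _ : n ≤ s.card, ⋂ v ∈ s, {ω : Sym2 V → Bool | v ∈ cluster H o ω} := by
    ext ω
    simp only [Set.mem_setOf_eq, clusterAtLeast, Set.mem_iUnion, Set.mem_iInter]
    constructor
    · rintro ⟨s, hs, hn⟩; exact ⟨s, hn, fun v hv => hs hv⟩
    · rintro ⟨s, hn, hs⟩; exact ⟨s, fun v hv => hs v hv, hn⟩
  rw [h]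
  exact MeasurableSet.iUnion fun s => MeasurableSet.iUnion fun _ =>
    MeasurableSet.biInter s.countable_toSet fun v _ => measurableSet_mem_cluster H o hlocfin v

lemma iInter_clusterAtLeast :
    (⋂ n : ℕ, {ω : Sym2 V → Bool | clusterAtLeast H o n ω}) =
      {ω : Sym2 V → Bool | (cluster H o ω).Infinite} := by
  ext ω
  simp only [Set.mem_iInter, Set.mem_setOf_eq, clusterAtLeast]
  constructor
  · intro h
    by_contra hfin
    rw [Set.not_infinite] at hfin
    obtain ⟨s, hs, hn⟩ := h (hfin.toFinset.card + 1)
    have hsub : s ⊆ hfin.toFinset := fun v hv => hfin.mem_toFinset.mpr (hs hv)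
    have := Finset.card_le_card hsub
    omega
  · intro h n
    obtain ⟨s, hs, hcard⟩ := h.exists_subset_card_eq n
    exact ⟨s, hs, hcard.ge⟩

lemma cluster_and_subset (z : (Sym2 V → Bool) × (Sym2 V → Bool)) :
    cluster H o (fun e => z.1 e && z.2 e) ⊆ cluster H o z.1 := by
  intro v hv
  refine SimpleGraph.Reachable.mono ?_ hv
  intro a b hab
  have hab' : H.Adj a b ∧ (z.1 s(a, b) && z.2 s(a, b)) = true := hab
  exact (show H.Adj a b ∧ z.1 s(a, b) = true from
    ⟨hab'.1, by have := hab'.2; simp only [Bool.and_eq_true] at this; exact this.1⟩)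

lemma psiVol_le_one {μe : Measure (Sym2 V → Bool)} [IsProbabilityMeasure μe] (n : ℕ) :
    psiVol H o n μe ≤ 1 := by
  have := prob_le_one (μ := μe) (s := {ω | clusterAtLeast H o n ω})
  calc psiVol H o n μe ≤ (1 : ℝ≥0∞).toReal := ENNReal.toReal_mono (by simp) this
    _ = 1 := by simp

lemma psiVol_nonneg {μe : Measure (Sym2 V → Bool)} (n : ℕ) : 0 ≤ psiVol H o n μe :=
  ENNReal.toReal_nonneg

/-- Monotonicity of `ψ_n` in the percolation parameter, via the AND-coupling. -/
lemma psiVol_mono [Countable V] (hlocfin : ∀ v : V, (H.neighborSet v).Finite)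
    {a b r : ℝ} (hb0 : 0 ≤ b) (hb1 : b ≤ 1) (hr0 : 0 ≤ r) (hr1 : r ≤ 1) (hab : a = b * r)
    {μa μb μr : Measure (Sym2 V → Bool)}
    (hA : IsBernoulliProduct a μa) (hB : IsBernoulliProduct b μb)
    (hR : IsBernoulliProduct r μr) (n : ℕ) :
    psiVol H o n μa ≤ psiVol H o n μb := by
  haveI := hB.1; haveI := hR.1
  have hmap := bernoulli_and_map hb0 hb1 hr0 hr1 hab hA hB hR
  set ev := {ω : Sym2 V → Bool | clusterAtLeast H o n ω} with hev
  have mev : MeasurableSet ev := measurableSet_clusterAtLeast H o hlocfin n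
  have key : μa ev = (μb.prod μr) (andMap ⁻¹' ev) := by
    rw [← hmap, Measure.map_apply measurable_andMap mev]
  have hsub : andMap ⁻¹' ev ⊆ ev ×ˢ Set.univ := by
    rintro z ⟨s, hs, hc⟩
    exact ⟨⟨s, fun v hv => cluster_and_subset H o z (hs hv), hc⟩, trivial⟩
  apply ENNReal.toReal_mono (measure_ne_top _ _)
  rw [key]
  calc (μb.prod μr) (andMap ⁻¹' ev) ≤ (μb.prod μr) (ev ×ˢ Set.univ) := measure_mono hsub
    _ = μb ev := by rw [Measure.prod_prod, measure_univ, mul_one]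

lemma measurableSet_magEvent [Countable V]
    (hlocfin : ∀ v : V, (H.neighborSet v).Finite) :
    MeasurableSet {z : (Sym2 V → Bool) × (V → Bool) | ∃ v ∈ cluster H o z.1, z.2 v = true} := by
  have h : {z : (Sym2 V → Bool) × (V → Bool) | ∃ v ∈ cluster H o z.1, z.2 v = true} =
      ⋃ v : V, {ω : Sym2 V → Bool | v ∈ cluster H o ω} ×ˢ
        ((fun ζ : V → Bool => ζ v) ⁻¹' {true}) := by
    ext z
    simp only [Set.mem_setOf_eq, Set.mem_iUnion, Set.mem_prod, Set.mem_preimage,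
      Set.mem_singleton_iff]
  rw [h]
  exact MeasurableSet.iUnion fun v =>
    (measurableSet_mem_cluster H o hlocfin v).prod
      ((measurable_pi_apply v) (measurableSet_singleton true))

/-- The key quantitative bound on the magnetization. -/
lemma mag_le [Countable V] (hlocfin : ∀ v : V, (H.neighborSet v).Finite)
    {p' h : ℝ} (hh : 0 < h) {μ' : Measure (Sym2 V → Bool)} {γh : Measure (V → Bool)}
    (hμ' : IsBernoulliProduct p' μ') (hγ : IsBernoulliProduct (1 - Real.exp (-h)) γh)
    (N : ℕ) :
    mag H o μ' γh ≤ (μ' {ω | clusterAtLeast H o N ω}).toReal + h * N := by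
  classical
  haveI := hμ'.1; haveI := hγ.1
  set E := {z : (Sym2 V → Bool) × (V → Bool) | ∃ v ∈ cluster H o z.1, z.2 v = true} with hE
  set A := {ω : Sym2 V → Bool | clusterAtLeast H o N ω} with hA
  have mE : MeasurableSet E := measurableSet_magEvent H o hlocfin
  have mA : MeasurableSet A := measurableSet_clusterAtLeast H o hlocfin N
  have hsplit : (μ'.prod γh) E ≤ (μ'.prod γh) (A ×ˢ Set.univ) +
      (μ'.prod γh) (E ∩ (Aᶜ ×ˢ Set.univ)) := by
    refine le_trans (measure_mono ?_) (measure_union_le _ _)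
    intro z hz
    by_cases hzA : z.1 ∈ A
    · exact Or.inl ⟨hzA, trivial⟩
    · exact Or.inr ⟨hz, hzA, trivial⟩
  have h1 : (μ'.prod γh) (A ×ˢ Set.univ) = μ' A := by
    rw [Measure.prod_prod, measure_univ, mul_one]
  have h2 : (μ'.prod γh) (E ∩ (Aᶜ ×ˢ Set.univ)) ≤ ENNReal.ofReal (h * N) := by
    rw [Measure.prod_apply (mE.inter (mA.compl.prod MeasurableSet.univ))]
    have hbound : ∀ ω : Sym2 V → Bool,
        γh (Prod.mk ω ⁻¹' (E ∩ (Aᶜ ×ˢ Set.univ))) ≤ ENNReal.ofReal (h * N) := by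
      intro ω
      by_cases hωA : ω ∈ A
      · have : Prod.mk ω ⁻¹' (E ∩ (Aᶜ ×ˢ Set.univ)) = ∅ := by
          ext ζ; simp [Set.mem_preimage, hωA]
        rw [this]; simp
      · have hfin : (cluster H o ω).Finite := by
          by_contra hinf
          obtain ⟨s, hs, hcard⟩ := (Set.Infinite.exists_subset_card_eq hinf N)
          exact hωA ⟨s, hs, hcard.ge⟩
        have hcard : hfin.toFinset.card ≤ N := by
          by_contra hlt
          push_neg at hlt
          exact hωA ⟨hfin.toFinset, fun v hv => hfin.mem_toFinset.mp hv, hlt.le⟩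
        have hsub : Prod.mk ω ⁻¹' (E ∩ (Aᶜ ×ˢ Set.univ)) ⊆
            (cyl hfin.toFinset (fun _ => false))ᶜ := by
          rintro ζ ⟨hζE, -⟩
          obtain ⟨v, hv, hζv⟩ := hζE
          intro hcyl
          have h2 := hcyl v (hfin.mem_toFinset.mpr hv)
          have h3 : ζ v = true := hζv
          rw [h3] at h2
          simp at h2
        refine le_trans (measure_mono hsub) ?_
        rw [prob_compl_eq_one_sub (measurableSet_cyl _ _), cyl_measure hγ]
        have hprod : (∏ i ∈ hfin.toFinset,
            (if (fun _ : V => false) i then ENNReal.ofReal (1 - Real.exp (-h))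
              else ENNReal.ofReal (1 - (1 - Real.exp (-h))))) =
            ENNReal.ofReal (Real.exp (-h) ^ hfin.toFinset.card) := by
          calc (∏ i ∈ hfin.toFinset,
              (if (fun _ : V => false) i then ENNReal.ofReal (1 - Real.exp (-h))
                else ENNReal.ofReal (1 - (1 - Real.exp (-h))))) =
              ∏ _i ∈ hfin.toFinset, ENNReal.ofReal (Real.exp (-h)) := by
                refine Finset.prod_congr rfl fun i _ => ?_
                norm_num
            _ = ENNReal.ofReal (Real.exp (-h)) ^ hfin.toFinset.card := Finset.prod_const _
            _ = ENNReal.ofReal (Real.exp (-h) ^ hfin.toFinset.card) :=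
                (ENNReal.ofReal_pow (Real.exp_nonneg _) _).symm
        rw [hprod]
        rw [tsub_le_iff_right, ← ENNReal.ofReal_add (by positivity) (by positivity)]
        have hk : Real.exp (-h) ^ hfin.toFinset.card = Real.exp (-(h * hfin.toFinset.card)) := by
          rw [← Real.exp_nat_mul]
          ring_nf
        have hexp : 1 - h * hfin.toFinset.card ≤ Real.exp (-(h * hfin.toFinset.card)) := by
          have := Real.add_one_le_exp (-(h * hfin.toFinset.card))
          linarith
        have hkN : h * (hfin.toFinset.card : ℝ) ≤ h * N := by
          have : (hfin.toFinset.card : ℝ) ≤ N := by exact_mod_cast hcard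
          nlinarith
        have hsum : (1 : ℝ) ≤ h * N + Real.exp (-h) ^ hfin.toFinset.card := by
          rw [hk]; linarith
        calc (1 : ℝ≥0∞) = ENNReal.ofReal 1 := by simp
          _ ≤ ENNReal.ofReal (h * N + Real.exp (-h) ^ hfin.toFinset.card) :=
              ENNReal.ofReal_le_ofReal hsum
    refine le_trans (lintegral_mono hbound) ?_
    simp [lintegral_const, measure_univ]
  calc (mag H o μ' γh) = ((μ'.prod γh) E).toReal := rfl
    _ ≤ ((μ' A) + ENNReal.ofReal (h * N)).toReal := by
        apply ENNReal.toReal_mono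
        · exact ENNReal.add_ne_top.mpr ⟨measure_ne_top _ _, ENNReal.ofReal_ne_top⟩
        · exact le_trans hsplit (by rw [h1]; exact add_le_add le_rfl h2)
    _ ≤ (μ' A).toReal + h * N := by
        rw [ENNReal.toReal_add (measure_ne_top _ _) ENNReal.ofReal_ne_top]
        gcongr
        rw [ENNReal.toReal_ofReal (by positivity)]

end Graph

end ExpDecayAux

/-- Assuming the near-critical inequality, the cluster volume has an exponential tail in the
whole subcritical phase: for every `p < p_c` there are `C, c > 0` with `ψ_n(p) ≤ C e^{-cn}`. -/


theorem exponential_decay_of_near_critical {V : Type*} (H : SimpleGraph V) (o : V)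
    (hconn : H.Connected) (hinf : Infinite V)
    (hlocfin : ∀ v : V, (H.neighborSet v).Finite)
    (htrans : ∀ u v : V, ∃ φ : H ≃g H, φ u = v)
    (μ : ℝ → Measure (Sym2 V → Bool)) (hμ : ∀ p ∈ Set.Icc (0:ℝ) 1, IsBernoulliProduct p (μ p))
    (γ : ℝ → Measure (V → Bool))
    (hγ : ∀ h : ℝ, 0 < h → IsBernoulliProduct (1 - Real.exp (-h)) (γ h))
    (hnear : ∀ p ∈ Set.Icc (0:ℝ) 1, ∀ h : ℝ, 0 < h →
      mag H o (μ p) (γ h) < 1 →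
      ∀ n : ℕ,
        psiVol H o n (μ (p * (1 - mag H o (μ p) (γ h)))) ≤
          psiVol H o n (μ p) * Real.exp (-h * n) / (1 - mag H o (μ p) (γ h))) :
    ∀ p : ℝ, 0 ≤ p → p < pCrit H o μ →
      ∃ C > (0:ℝ), ∃ c > (0:ℝ), ∀ n : ℕ, psiVol H o n (μ p) ≤ C * Real.exp (-c * n) := by
  intro p hp0 hppc
  classical
  haveI : Countable V := ExpDecayAux.countable_of_connected_locallyFinite H o hconn hlocfin
  have hpCrit : pCrit H o μ = sInf {q | q ∈ Set.Icc (0:ℝ) 1 ∧ 0 < theta H o (μ q)} := rfl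
  set S := {q | q ∈ Set.Icc (0:ℝ) 1 ∧ 0 < theta H o (μ q)} with hSdef
  have hSne : S.Nonempty := by
    by_contra hne
    rw [Set.not_nonempty_iff_eq_empty] at hne
    rw [hpCrit, hne, Real.sInf_empty] at hppc
    linarith
  have hbdd : BddBelow S := ⟨0, fun x hx => hx.1.1⟩
  have hpc1 : pCrit H o μ ≤ 1 := by
    obtain ⟨x, hx⟩ := hSne
    rw [hpCrit]
    exact le_trans (csInf_le hbdd hx) hx.1.2
  have hpc_pos : 0 < pCrit H o μ := lt_of_le_of_lt hp0 hppc
  set p' := (p + pCrit H o μ) / 2 with hp'def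
  have hp'0 : 0 < p' := by rw [hp'def]; linarith
  have hpp' : p < p' := by rw [hp'def]; linarith
  have hp'pc : p' < pCrit H o μ := by rw [hp'def]; linarith
  have hp'1 : p' ≤ 1 := by linarith
  have hp'mem : p' ∈ Set.Icc (0:ℝ) 1 := ⟨hp'0.le, hp'1⟩
  have hμ' := hμ p' hp'mem
  haveI := hμ'.1
  -- θ(p') = 0
  have hθ : (μ p') {ω | (cluster H o ω).Infinite} = 0 := by
    have hnotpos : ¬ 0 < theta H o (μ p') := by
      intro hpos
      have : pCrit H o μ ≤ p' := by
        rw [hpCrit]; exact csInf_le hbdd ⟨hp'mem, hpos⟩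
      linarith
    have hth0 : theta H o (μ p') = 0 :=
      le_antisymm (not_lt.mp hnotpos) ENNReal.toReal_nonneg
    rcases (ENNReal.toReal_eq_zero_iff _).mp hth0 with h0 | htop
    · exact h0
    · exact absurd htop (measure_ne_top _ _)
  set ε := 1 - p / p' with hεdef
  have hεpos : 0 < ε := by
    have : p / p' < 1 := (div_lt_one hp'0).mpr hpp'
    rw [hεdef]; linarith
  have hε1 : ε ≤ 1 := by
    have : 0 ≤ p / p' := div_nonneg hp0 hp'0.le
    rw [hεdef]; linarith
  -- choose N with small tail
  have htend : Tendsto (fun N : ℕ => (μ p') {ω | clusterAtLeast H o N ω}) atTop (nhds 0) := by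
    have ht := tendsto_measure_iInter_atTop (μ := μ p')
      (s := fun N : ℕ => {ω : Sym2 V → Bool | clusterAtLeast H o N ω})
      (fun N => (ExpDecayAux.measurableSet_clusterAtLeast H o hlocfin N).nullMeasurableSet)
      (fun N M hNM ω hω => by
        obtain ⟨s, hs, hc⟩ := hω
        exact ⟨s, hs, le_trans hNM hc⟩)
      ⟨0, measure_ne_top _ _⟩
    rw [ExpDecayAux.iInter_clusterAtLeast, hθ] at ht
    exact ht
  have hev : ∀ᶠ N : ℕ in atTop,
      (μ p') {ω | clusterAtLeast H o N ω} < ENNReal.ofReal (ε / 2) :=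
    htend.eventually_lt_const (ENNReal.ofReal_pos.mpr (by positivity))
  obtain ⟨N, hN⟩ := hev.exists
  have hNr : ((μ p') {ω | clusterAtLeast H o N ω}).toReal < ε / 2 :=
    (ENNReal.lt_ofReal_iff_toReal_lt (measure_ne_top _ _)).mp hN
  set h := ε / (4 * ((N : ℝ) + 1)) with hhdef
  have hhpos : 0 < h := by rw [hhdef]; positivity
  have hγh := hγ h hhpos
  haveI := hγh.1
  set m := mag H o (μ p') (γ h) with hmdef
  have hm0 : 0 ≤ m := ENNReal.toReal_nonneg
  have hmlt : m < ε := by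
    have hbound := ExpDecayAux.mag_le H o hlocfin hhpos hμ' hγh N
    rw [← hmdef] at hbound
    have hN4 : h * (4 * ((N : ℝ) + 1)) = ε := by
      rw [hhdef]; field_simp
    have hNle : (N : ℝ) ≤ (N : ℝ) + 1 := by linarith
    have h1 : h * N ≤ h * ((N : ℝ) + 1) := by nlinarith
    have h2 : h * ((N : ℝ) + 1) = ε / 4 := by linear_combination hN4 / 4
    have hhN : h * N < ε / 2 := by linarith
    linarith
  have hm1 : m < 1 := lt_of_lt_of_le hmlt hε1
  set q := p' * (1 - m) with hqdef
  have hq_gt : p < q := by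
    have h1m : 1 - ε < 1 - m := by linarith
    have hmul : p' * (1 - ε) < p' * (1 - m) := by nlinarith
    have hpe : p' * (1 - ε) = p := by
      rw [hεdef]
      field_simp
      ring
    rw [hqdef]; linarith
  have hq0 : 0 < q := lt_of_le_of_lt hp0 hq_gt
  have hq1 : q ≤ 1 := by
    have : q ≤ p' := by rw [hqdef]; nlinarith
    linarith
  have hμq := hμ q ⟨hq0.le, hq1⟩
  set r := p / q with hrdef
  have hr0 : 0 ≤ r := div_nonneg hp0 hq0.le
  have hr1 : r ≤ 1 := by
    rw [hrdef]
    exact (div_le_one hq0).mpr hq_gt.le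
  have hμr := hμ r ⟨hr0, hr1⟩
  have hpq : p = q * r := by
    rw [hrdef]
    field_simp
  have hμp := hμ p ⟨hp0, by linarith⟩
  have hmono := ExpDecayAux.psiVol_mono H o hlocfin hq0.le hq1 hr0 hr1 hpq hμp hμq hμr
  have hnear' := hnear p' hp'mem h hhpos (by rw [← hmdef]; exact hm1)
  refine ⟨1 / (1 - m), by have : 0 < 1 - m := by linarith
                          positivity, h, hhpos, fun n => ?_⟩
  have hstep := hnear' n
  rw [← hmdef, ← hqdef] at hstep
  have hψ1 : psiVol H o n (μ p') ≤ 1 := ExpDecayAux.psiVol_le_one H o n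
  have hexp : (0:ℝ) < Real.exp (-h * n) := Real.exp_pos _
  have h1m : (0:ℝ) < 1 - m := by linarith
  calc psiVol H o n (μ p) ≤ psiVol H o n (μ q) := hmono n
    _ ≤ psiVol H o n (μ p') * Real.exp (-h * n) / (1 - m) := hstep
    _ ≤ 1 * Real.exp (-h * n) / (1 - m) := by gcongr
    _ = 1 / (1 - m) * Real.exp (-h * n) := by ring
end

section
/- Assume that for all p ∈ [0,1] and all h > 0, p(1 − m_h(p)) ≤ p_c. Then for every p ≥ p_c, the percolation probability satisfies μ_p[|C_o| = ∞] ≥ (p − p_c)/p (the mean-field lower bound). -/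
open MeasureTheory ProbabilityTheory Filter
open scoped ENNReal

lemma openSub_le {V : Type*} (H : SimpleGraph V) (ω : Sym2 V → Bool) : openSub H ω ≤ H :=
  fun _ _ h => h.1

lemma openSub_edge {V : Type*} {H : SimpleGraph V} {ω : Sym2 V → Bool} {e : Sym2 V}
    (he : e ∈ (openSub H ω).edgeSet) : ω e = true := by
  induction e using Sym2.ind with
  | _ a b => exact ((SimpleGraph.mem_edgeSet _).mp he).2

lemma mem_cluster_iff {V : Type*} (H : SimpleGraph V) (o v : V) (ω : Sym2 V → Bool) :
    v ∈ cluster H o ω ↔ ∃ W : H.Walk o v, ∀ e ∈ W.edges, ω e = true := by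
  constructor
  · rintro ⟨q⟩
    refine ⟨q.transfer H (fun e he =>
      SimpleGraph.edgeSet_mono (openSub_le H ω) (q.edges_subset_edgeSet he)), ?_⟩
    intro e he
    rw [q.edges_transfer] at he
    exact openSub_edge (q.edges_subset_edgeSet he)
  · rintro ⟨W, hW⟩
    refine (W.transfer (openSub H ω) ?_).reachable
    intro e he
    induction e using Sym2.ind with
    | _ a b => exact (SimpleGraph.mem_edgeSet _).mpr ⟨W.adj_of_mem_edges he, hW _ he⟩

lemma ball_finite {V : Type*} {H : SimpleGraph V} (hlocfin : ∀ v : V, (H.neighborSet v).Finite)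
    (o : V) (n : ℕ) : {v : V | ∃ w : H.Walk v o, w.length < n}.Finite := by
  induction n with
  | zero =>
    convert Set.finite_empty
    ext v
    simp
  | succ n ih =>
    refine ((ih.biUnion (fun u _ => hlocfin u)).insert o).subset ?_
    rintro v ⟨w, hw⟩
    cases w with
    | nil => exact Set.mem_insert _ _
    | cons h w' =>
      refine Set.mem_insert_iff.mpr (Or.inr ?_)
      refine Set.mem_biUnion ⟨w', by simpa using Nat.lt_of_succ_lt_succ hw⟩ h.symm

lemma countable_of_conn {V : Type*} {H : SimpleGraph V} (hconn : H.Connected)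
    (hlocfin : ∀ v : V, (H.neighborSet v).Finite) (o : V) : Countable V := by
  rw [← Set.countable_univ_iff]
  refine Set.Countable.mono ?_ (Set.countable_iUnion
    (fun n => (ball_finite hlocfin o n).countable))
  intro v _
  obtain ⟨w⟩ := hconn.preconnected v o
  exact Set.mem_iUnion.mpr ⟨w.length + 1, w, Nat.lt_succ_self _⟩

lemma cluster_subset_ball {V : Type*} {H : SimpleGraph V} {o : V} {n : ℕ} {ω : Sym2 V → Bool}
    (h : ¬ clusterAtLeast H o n ω) :
    cluster H o ω ⊆ {v : V | ∃ w : H.Walk v o, w.length < n} := by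
  rintro v ⟨q⟩
  classical
  set P := q.toPath with hP
  have hsupp : ∀ u ∈ (P : (openSub H ω).Walk o v).support, u ∈ cluster H o ω := by
    intro u hu
    exact ((P : (openSub H ω).Walk o v).takeUntil u hu).reachable
  have hsub : ↑(P : (openSub H ω).Walk o v).support.toFinset ⊆ cluster H o ω := by
    intro u hu
    exact hsupp u (by simpa using hu)
  have hcard : (P : (openSub H ω).Walk o v).support.toFinset.card < n := by
    by_contra hc
    exact h ⟨_, hsub, le_of_not_gt hc⟩
  rw [List.toFinset_card_of_nodup P.2.support_nodup,
    SimpleGraph.Walk.length_support] at hcard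
  refine ⟨((P : (openSub H ω).Walk o v).reverse.transfer H (fun e he =>
    SimpleGraph.edgeSet_mono (openSub_le H ω)
      ((P : (openSub H ω).Walk o v).reverse.edges_subset_edgeSet he))), ?_⟩
  rw [SimpleGraph.Walk.length_transfer, SimpleGraph.Walk.length_reverse]
  omega

lemma cluster_infinite_iff {V : Type*} (H : SimpleGraph V) (o : V) (ω : Sym2 V → Bool) :
    (cluster H o ω).Infinite ↔ ∀ n, clusterAtLeast H o n ω := by
  classical
  constructor
  · intro hi n
    obtain ⟨t, ht, hcard⟩ := hi.exists_subset_card_eq n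
    exact ⟨t, ht, hcard.ge⟩
  · intro hn
    by_contra hf
    rw [Set.not_infinite] at hf
    obtain ⟨s, hs, hcard⟩ := hn (hf.toFinset.card + 1)
    have : s ⊆ hf.toFinset := fun v hv => hf.mem_toFinset.mpr (hs hv)
    have := Finset.card_le_card this
    omega

lemma measurableSet_mem_cluster {V : Type*} [Countable V] (H : SimpleGraph V) (o v : V) :
    MeasurableSet {ω : Sym2 V → Bool | v ∈ cluster H o ω} := by
  have : {ω : Sym2 V → Bool | v ∈ cluster H o ω} =
      ⋃ l : List (Sym2 V), {ω | (∃ W : H.Walk o v, W.edges = l) ∧ ∀ e ∈ l, ω e = true} := by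
    ext ω
    simp only [Set.mem_setOf_eq, Set.mem_iUnion, mem_cluster_iff]
    constructor
    · rintro ⟨W, hW⟩; exact ⟨W.edges, ⟨W, rfl⟩, hW⟩
    · rintro ⟨l, ⟨W, rfl⟩, hl⟩; exact ⟨W, hl⟩
  rw [this]
  refine MeasurableSet.iUnion fun l => ?_
  by_cases hW : ∃ W : H.Walk o v, W.edges = l
  · have : {ω : Sym2 V → Bool | (∃ W : H.Walk o v, W.edges = l) ∧ ∀ e ∈ l, ω e = true} =
        ⋂ e ∈ l, {ω | ω e = true} := by
      ext ω; simp [hW]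
    rw [this]
    refine MeasurableSet.biInter l.finite_toSet.countable fun e _ => ?_
    have : {ω : Sym2 V → Bool | ω e = true} =
        (fun ω : Sym2 V → Bool => ω e) ⁻¹' {true} := rfl
    rw [this]
    exact measurable_pi_apply e (measurableSet_singleton true)
  · have : {ω : Sym2 V → Bool | (∃ W : H.Walk o v, W.edges = l) ∧ ∀ e ∈ l, ω e = true} = ∅ := by
      ext ω; simp [hW]
    rw [this]; exact MeasurableSet.empty

lemma measurableSet_clusterAtLeast {V : Type*} [Countable V] (H : SimpleGraph V) (o : V) (n : ℕ) :
    MeasurableSet {ω : Sym2 V → Bool | clusterAtLeast H o n ω} := by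
  have : {ω : Sym2 V → Bool | clusterAtLeast H o n ω} =
      ⋃ s : Finset V, ⋃ _ : n ≤ s.card, ⋂ v ∈ s, {ω | v ∈ cluster H o ω} := by
    ext ω
    simp only [Set.mem_setOf_eq, Set.mem_iUnion, Set.mem_iInter, clusterAtLeast]
    constructor
    · rintro ⟨s, hs, hcard⟩; exact ⟨s, hcard, fun v hv => hs hv⟩
    · rintro ⟨s, hcard, hs⟩; exact ⟨s, fun v hv => hs v hv, hcard⟩
  rw [this]
  refine MeasurableSet.iUnion fun s => MeasurableSet.iUnion fun _ =>
    MeasurableSet.biInter s.countable_toSet fun v _ => measurableSet_mem_cluster H o v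

/-- The mean-field lower bound: if `p(1 - m_h(p)) ≤ p_c` for all `p` and `h > 0`, then for
every `p ≥ p_c`, `μ_p[|C_o| = ∞] ≥ (p - p_c)/p`. -/
theorem mean_field_lower_bound {V : Type*} (H : SimpleGraph V) (o : V)
    (hconn : H.Connected) (hinf : Infinite V)
    (hlocfin : ∀ v : V, (H.neighborSet v).Finite)
    (htrans : ∀ u v : V, ∃ φ : H ≃g H, φ u = v)
    (μ : ℝ → Measure (Sym2 V → Bool)) (hμ : ∀ p ∈ Set.Icc (0:ℝ) 1, IsBernoulliProduct p (μ p))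
    (γ : ℝ → Measure (V → Bool))
    (hγ : ∀ h : ℝ, 0 < h → IsBernoulliProduct (1 - Real.exp (-h)) (γ h))
    (hkey : ∀ p ∈ Set.Icc (0:ℝ) 1, ∀ h : ℝ, 0 < h →
      p * (1 - mag H o (μ p) (γ h)) ≤ pCrit H o μ) :
    ∀ p : ℝ, pCrit H o μ ≤ p → p ≤ 1 →
      (p - pCrit H o μ) / p ≤ theta H o (μ p) := by
  intro p hpcp hp1
  have hpc0 : 0 ≤ pCrit H o μ := Real.sInf_nonneg fun x hx => hx.1.1
  rcases eq_or_lt_of_le (hpc0.trans hpcp) with hp0 | hp0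
  · rw [← hp0, div_zero]
    exact ENNReal.toReal_nonneg
  have pmem : p ∈ Set.Icc (0:ℝ) 1 := ⟨hp0.le, hp1⟩
  obtain ⟨hprob, _hcyl⟩ := hμ p pmem
  haveI := hprob
  haveI hcount : Countable V := countable_of_conn hconn hlocfin o
  set pc := pCrit H o μ with hpc
  set A : ℕ → Set (Sym2 V → Bool) := fun n => {ω | clusterAtLeast H o n ω} with hA
  classical
  have key : ∀ n, (p - pc) / p ≤ (μ p (A n)).toReal := by
    intro n
    set Bn := (ball_finite hlocfin o n).toFinset with hBn
    set c : ℝ := (Bn.card : ℝ) with hc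
    have hc0 : 0 ≤ c := Nat.cast_nonneg _
    have hstep : ∀ h : ℝ, 0 < h → (p - pc) / p ≤ (μ p (A n)).toReal + c * h := by
      intro h hh
      obtain ⟨hγprob, hγcyl⟩ := hγ h hh
      haveI := hγprob
      have hexp0 : 0 ≤ 1 - Real.exp (-h) := by
        have h1 : Real.exp (-h) ≤ Real.exp 0 := Real.exp_le_exp.mpr (by linarith)
        rw [Real.exp_zero] at h1
        linarith
      have hesub : {z : (Sym2 V → Bool) × (V → Bool) | ∃ v ∈ cluster H o z.1, z.2 v = true}
          ⊆ (A n ×ˢ Set.univ) ∪ (Set.univ ×ˢ {g : V → Bool | ∃ v ∈ Bn, g v = true}) := by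
        rintro ⟨ω, g⟩ ⟨v, hv, hg⟩
        by_cases hcl : clusterAtLeast H o n ω
        · exact Or.inl ⟨hcl, trivial⟩
        · refine Or.inr ⟨trivial, v, ?_, hg⟩
          rw [hBn, Set.Finite.mem_toFinset]
          exact cluster_subset_ball hcl hv
      have hγsingle : ∀ v : V, γ h {g : V → Bool | g v = true}
          = ENNReal.ofReal (1 - Real.exp (-h)) := by
        intro v
        have h2 := hγcyl {v} (fun _ => true)
        simpa using h2
      have hγG : γ h {g : V → Bool | ∃ v ∈ Bn, g v = true}
          ≤ (Bn.card : ℝ≥0∞) * ENNReal.ofReal (1 - Real.exp (-h)) := by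
        have hsub : {g : V → Bool | ∃ v ∈ Bn, g v = true}
            ⊆ ⋃ v ∈ Bn, {g : V → Bool | g v = true} := by
          rintro g ⟨v, hv, hg⟩; exact Set.mem_biUnion hv hg
        calc γ h {g : V → Bool | ∃ v ∈ Bn, g v = true}
            ≤ γ h (⋃ v ∈ Bn, {g : V → Bool | g v = true}) := measure_mono hsub
          _ ≤ ∑ v ∈ Bn, γ h {g : V → Bool | g v = true} := measure_biUnion_finset_le _ _
          _ = (Bn.card : ℝ≥0∞) * ENNReal.ofReal (1 - Real.exp (-h)) := by
              simp [hγsingle, Finset.sum_const, nsmul_eq_mul]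
      have hmeas : (μ p).prod (γ h) {z | ∃ v ∈ cluster H o z.1, z.2 v = true}
          ≤ μ p (A n) + (Bn.card : ℝ≥0∞) * ENNReal.ofReal (1 - Real.exp (-h)) := by
        calc (μ p).prod (γ h) {z | ∃ v ∈ cluster H o z.1, z.2 v = true}
            ≤ (μ p).prod (γ h)
              ((A n ×ˢ Set.univ) ∪ (Set.univ ×ˢ {g : V → Bool | ∃ v ∈ Bn, g v = true})) :=
              measure_mono hesub
          _ ≤ (μ p).prod (γ h) (A n ×ˢ Set.univ)
              + (μ p).prod (γ h) (Set.univ ×ˢ {g : V → Bool | ∃ v ∈ Bn, g v = true}) :=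
              measure_union_le _ _
          _ ≤ μ p (A n) + (Bn.card : ℝ≥0∞) * ENNReal.ofReal (1 - Real.exp (-h)) := by
              rw [Measure.prod_prod, Measure.prod_prod]
              simp only [measure_univ, mul_one, one_mul]
              exact add_le_add le_rfl hγG
      have hmul_ne : (Bn.card : ℝ≥0∞) * ENNReal.ofReal (1 - Real.exp (-h)) ≠ ∞ :=
        ENNReal.mul_ne_top (ENNReal.natCast_ne_top _) ENNReal.ofReal_ne_top
      have hrhs_ne : μ p (A n) + (Bn.card : ℝ≥0∞) * ENNReal.ofReal (1 - Real.exp (-h)) ≠ ∞ :=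
        ENNReal.add_ne_top.mpr ⟨measure_ne_top _ _, hmul_ne⟩
      have hmag : mag H o (μ p) (γ h) ≤ (μ p (A n)).toReal + c * (1 - Real.exp (-h)) := by
        have h3 := ENNReal.toReal_mono hrhs_ne hmeas
        rw [ENNReal.toReal_add (measure_ne_top _ _) hmul_ne, ENNReal.toReal_mul,
          ENNReal.toReal_natCast, ENNReal.toReal_ofReal hexp0] at h3
        exact h3
      have hmag_ge : (p - pc) / p ≤ mag H o (μ p) (γ h) := by
        have hk := hkey p pmem h hh
        rw [div_le_iff₀ hp0]
        nlinarith
      have hbound : 1 - Real.exp (-h) ≤ h := by nlinarith [Real.add_one_le_exp (-h)]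
      calc (p - pc) / p ≤ mag H o (μ p) (γ h) := hmag_ge
        _ ≤ (μ p (A n)).toReal + c * (1 - Real.exp (-h)) := hmag
        _ ≤ (μ p (A n)).toReal + c * h := by nlinarith
    refine le_of_forall_pos_le_add fun ε hε => ?_
    have hcpos : (0:ℝ) < c + 1 := by linarith
    have hh : 0 < ε / (c + 1) := by positivity
    have h4 := hstep _ hh
    have h5 : c * (ε / (c + 1)) ≤ ε := by
      rw [mul_div_assoc']
      rw [div_le_iff₀ hcpos]
      nlinarith
    linarith
  have hInt : {ω : Sym2 V → Bool | (cluster H o ω).Infinite} = ⋂ n, A n := by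
    ext ω
    simp only [hA, Set.mem_setOf_eq, Set.mem_iInter, cluster_infinite_iff]
  have hanti : Antitone A := by
    intro m n hmn ω hω
    obtain ⟨s, hs, hcard⟩ := hω
    exact ⟨s, hs, hmn.trans hcard⟩
  have hiInf : μ p (⋂ n, A n) = ⨅ n, μ p (A n) :=
    hanti.measure_iInter (fun n => (measurableSet_clusterAtLeast H o n).nullMeasurableSet)
      ⟨0, measure_ne_top _ _⟩
  have h1 : ENNReal.ofReal ((p - pc) / p) ≤ μ p (⋂ n, A n) := by
    rw [hiInf]
    exact le_iInf fun n => ENNReal.ofReal_le_of_le_toReal (key n)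
  have hq0 : 0 ≤ (p - pc) / p := div_nonneg (by linarith) hp0.le
  have h6 := ENNReal.toReal_mono (measure_ne_top _ _) h1
  rw [ENNReal.toReal_ofReal hq0] at h6
  have h7 : theta H o (μ p) = (μ p (⋂ n, A n)).toReal := by
    rw [theta, hInt]
  rw [h7]
  exact h6
end
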